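/- arXiv:1502.04231 — 5 statements merged into one kernel-verified Lean document; each statement's English description precedes it below -/
import Mathlib

section
/- Let X = (x₀, x₁, x₂) ∈ ℝ³ with 0 < x₀ < x₁ < x₂ and x₀, x₁, x₂ linearly independent over ℚ. Then for every run of the Smallest Vector Algorithm started at X, lim_{s→∞} max_{i=0,1,2} ‖gᵢ'⁽ˢ⁾‖ = +∞. -/
open Filter InnerProductGeometry Polynomial

noncomputable section

abbrev E3 := EuclideanSpace ℝ (Fin 3)

/-- Identify a plain function `Fin 3 → ℝ` with a point of Euclidean 3-space. -/
def toE3 (v : Fin 3 → ℝ) : E3 := (WithLp.equiv 2 (Fin 3 → ℝ)).symm v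

/-- The point of Euclidean 3-space attached to an integer vector. -/
def toR3 (v : Fin 3 → ℤ) : E3 := toE3 fun i => (v i : ℝ)

/-- Orthogonal projection of `h` onto the line `ℝ·X` (written `h''`). -/
def projL (X h : E3) : E3 := ((inner ℝ h X : ℝ) / ‖X‖ ^ 2) • X

/-- Orthogonal projection of `h` onto the plane `X^⊥` (written `h'`). -/
def projPl (X h : E3) : E3 := h - projL X h

/-- `gᵢ'` : projection of the `i`-th column onto the plane `X^⊥`. -/
def colP (X : E3) (g : Fin 3 → Fin 3 → ℤ) (i : Fin 3) : E3 := projPl X (toR3 (g i))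

/-- `gᵢ''` : projection of the `i`-th column onto the line `ℝ·X`. -/
def colL (X : E3) (g : Fin 3 → Fin 3 → ℤ) (i : Fin 3) : E3 := projL X (toR3 (g i))

def max3 (f : Fin 3 → ℝ) : ℝ := max (f 0) (max (f 1) (f 2))

def min3 (f : Fin 3 → ℝ) : ℝ := min (f 0) (min (f 1) (f 2))

/-- One step of the Smallest Vector Algorithm: from the columns `g` to the columns `g'`. -/
def SVAStep (X : E3) (g g' : Fin 3 → Fin 3 → ℤ) : Prop :=
  ∃ f : Fin 3 → Fin 3 → ℤ,
    ((min3 ![‖colP X g 1 - colP X g 0‖, ‖colP X g 2 - colP X g 1‖, ‖colP X g 2 - colP X g 0‖]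
        = ‖colP X g 1 - colP X g 0‖ ∧ f = ![g 0, g 1 - g 0, g 2]) ∨
     (min3 ![‖colP X g 1 - colP X g 0‖, ‖colP X g 2 - colP X g 1‖, ‖colP X g 2 - colP X g 0‖]
        = ‖colP X g 2 - colP X g 1‖ ∧ f = ![g 0, g 1, g 2 - g 1]) ∨
     (min3 ![‖colP X g 1 - colP X g 0‖, ‖colP X g 2 - colP X g 1‖, ‖colP X g 2 - colP X g 0‖]
        = ‖colP X g 2 - colP X g 0‖ ∧ f = ![g 0, g 1, g 2 - g 0])) ∧
    ∃ σ : Equiv.Perm (Fin 3), (∀ i, g' i = f (σ i)) ∧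
      ‖colL X g' 0‖ ≤ ‖colL X g' 1‖ ∧ ‖colL X g' 1‖ ≤ ‖colL X g' 2‖

/-- A run of the Smallest Vector Algorithm started at `X`: `g s i` is the `i`-th column of `G⁽ˢ⁾`. -/
def IsSVARun (X : E3) (g : ℕ → Fin 3 → Fin 3 → ℤ) : Prop :=
  (∀ i j, g 0 i j = if i = j then 1 else 0) ∧ ∀ s, SVAStep X (g s) (g (s + 1))

/-- The cofactor vector `X⁽ˢ⁾ = ᵀG⁽ˢ⁾·X`. -/
def cofVec (X : E3) (g : Fin 3 → Fin 3 → ℤ) (i : Fin 3) : ℝ := (inner ℝ (toR3 (g i)) X : ℝ)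

private def cofY (Y : E3) (v : Fin 3 → ℤ) : ℝ := ∑ j, (v j : ℝ) * Y j

private lemma cofY_sub (Y : E3) (v w : Fin 3 → ℤ) : cofY Y (v - w) = cofY Y v - cofY Y w := by
  simp only [cofY, Pi.sub_apply, Int.cast_sub, sub_mul]
  rw [Finset.sum_sub_distrib]

private lemma inner_toR3 (Y : E3) (v : Fin 3 → ℤ) : (inner ℝ (toR3 v) Y : ℝ) = cofY Y v := by
  rw [PiLp.inner_apply]
  simp [toR3, toE3, RCLike.inner_apply, conj_trivial, cofY, mul_comm]

private lemma norm_colL_eq (Y : E3) (hY : 0 < ‖Y‖) (g : Fin 3 → Fin 3 → ℤ) (i : Fin 3) :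
    ‖colL Y g i‖ = |cofY Y (g i)| / ‖Y‖ := by
  rw [colL, projL, inner_toR3, norm_smul, Real.norm_eq_abs, abs_div,
    abs_of_nonneg (by positivity : (0:ℝ) ≤ ‖Y‖^2)]
  field_simp

private lemma sva_step_key (Y : E3) (hY : 0 < ‖Y‖)
    (hker : ∀ w : Fin 3 → ℤ, cofY Y w = 0 → w = 0)
    (gs gs' : Fin 3 → Fin 3 → ℤ) (hstep : SVAStep Y gs gs')
    (hdet : Matrix.det (fun i j => ((gs i j : ℚ))) ≠ 0)
    (hpos : ∀ i, 0 < cofY Y (gs i))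
    (h01 : cofY Y (gs 0) ≤ cofY Y (gs 1)) (h12 : cofY Y (gs 1) ≤ cofY Y (gs 2)) :
    (Matrix.det (fun i j => ((gs' i j : ℚ))) ≠ 0) ∧ (∀ i, 0 < cofY Y (gs' i)) ∧
    (cofY Y (gs' 0) ≤ cofY Y (gs' 1)) ∧ (cofY Y (gs' 1) ≤ cofY Y (gs' 2)) ∧
    (cofY Y (gs' 0) + cofY Y (gs' 1) + cofY Y (gs' 2)
      < cofY Y (gs 0) + cofY Y (gs 1) + cofY Y (gs 2)) := by
  obtain ⟨f, hbranch, σ, hσ, hs01, hs12⟩ := hstep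
  set A : Matrix (Fin 3) (Fin 3) ℚ := fun m j => ((gs m j : ℚ)) with hA
  have hne : ∀ j k : Fin 3, j ≠ k → gs j - gs k ≠ 0 := by
    intro j k hjk hzero
    apply hdet
    apply Matrix.det_zero_of_row_eq hjk
    funext l
    have h2 : gs j = gs k := by rwa [sub_eq_zero] at hzero
    show ((gs j l : ℚ)) = ((gs k l : ℚ))
    rw [h2]
  have hstrict : ∀ j k : Fin 3, j ≠ k → cofY Y (gs k) ≤ cofY Y (gs j) →
      0 < cofY Y (gs j - gs k) := by
    intro j k hjk hle
    rw [cofY_sub]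
    rcases lt_or_eq_of_le hle with h | h
    · linarith
    · exfalso
      apply hne j k hjk
      apply hker
      rw [cofY_sub, h]
      ring
  -- determinant transfer for a row subtraction
  have hdet_sub : ∀ (j k : Fin 3), j ≠ k →
      (Matrix.updateRow A j (A j - A k)).det = A.det := by
    intro j k hjk
    have h := Matrix.det_updateRow_add_smul_self A hjk (-1 : ℚ)
    have e : A j + (-1 : ℚ) • A k = A j - A k := by
      funext l; simp [sub_eq_add_neg]
    rwa [e] at h
  have hmain : (∀ m, 0 < cofY Y (f m)) ∧
      (cofY Y (f 0) + cofY Y (f 1) + cofY Y (f 2)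
        < cofY Y (gs 0) + cofY Y (gs 1) + cofY Y (gs 2)) ∧
      (Matrix.det (fun m j => ((f m j : ℚ))) ≠ 0) := by
    rcases hbranch with ⟨hmin, hf⟩ | ⟨hmin, hf⟩ | ⟨hmin, hf⟩
    · -- f = ![gs 0, gs 1 - gs 0, gs 2]
      have p1 : 0 < cofY Y (gs 1 - gs 0) := hstrict 1 0 (by decide) h01
      refine ⟨?_, ?_, ?_⟩
      · intro m
        fin_cases m
        · exact hf ▸ hpos 0
        · exact hf ▸ p1
        · exact hf ▸ hpos 2
      · have e : cofY Y (f 0) + cofY Y (f 1) + cofY Y (f 2)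
            = cofY Y (gs 0) + cofY Y (gs 1 - gs 0) + cofY Y (gs 2) := by rw [hf]; rfl
        rw [e, cofY_sub]
        have := hpos 0
        linarith
      · have eA : (fun (m : Fin 3) (j : Fin 3) => ((f m j : ℚ)))
            = Matrix.updateRow A 1 (A 1 - A 0) := by
          subst hf
          funext m j
          fin_cases m
          · show ((gs 0 j : ℚ)) = Matrix.updateRow A 1 (A 1 - A 0) 0 j
            rw [Matrix.updateRow_ne (by decide : (0 : Fin 3) ≠ 1)]
          · show (((gs 1 - gs 0) j : ℚ)) = Matrix.updateRow A 1 (A 1 - A 0) 1 j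
            rw [Matrix.updateRow_self]
            simp [hA]
          · show ((gs 2 j : ℚ)) = Matrix.updateRow A 1 (A 1 - A 0) 2 j
            rw [Matrix.updateRow_ne (by decide : (2 : Fin 3) ≠ 1)]
        rw [eA, hdet_sub 1 0 (by decide)]
        exact hdet
    · -- f = ![gs 0, gs 1, gs 2 - gs 1]
      have p1 : 0 < cofY Y (gs 2 - gs 1) := hstrict 2 1 (by decide) h12
      refine ⟨?_, ?_, ?_⟩
      · intro m
        fin_cases m
        · exact hf ▸ hpos 0
        · exact hf ▸ hpos 1
        · exact hf ▸ p1
      · have e : cofY Y (f 0) + cofY Y (f 1) + cofY Y (f 2)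
            = cofY Y (gs 0) + cofY Y (gs 1) + cofY Y (gs 2 - gs 1) := by rw [hf]; rfl
        rw [e, cofY_sub]
        have := hpos 1
        linarith
      · have eA : (fun (m : Fin 3) (j : Fin 3) => ((f m j : ℚ)))
            = Matrix.updateRow A 2 (A 2 - A 1) := by
          subst hf
          funext m j
          fin_cases m
          · show ((gs 0 j : ℚ)) = Matrix.updateRow A 2 (A 2 - A 1) 0 j
            rw [Matrix.updateRow_ne (by decide : (0 : Fin 3) ≠ 2)]
          · show ((gs 1 j : ℚ)) = Matrix.updateRow A 2 (A 2 - A 1) 1 j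
            rw [Matrix.updateRow_ne (by decide : (1 : Fin 3) ≠ 2)]
          · show (((gs 2 - gs 1) j : ℚ)) = Matrix.updateRow A 2 (A 2 - A 1) 2 j
            rw [Matrix.updateRow_self]
            simp [hA]
        rw [eA, hdet_sub 2 1 (by decide)]
        exact hdet
    · -- f = ![gs 0, gs 1, gs 2 - gs 0]
      have p1 : 0 < cofY Y (gs 2 - gs 0) := hstrict 2 0 (by decide) (le_trans h01 h12)
      refine ⟨?_, ?_, ?_⟩
      · intro m
        fin_cases m
        · exact hf ▸ hpos 0
        · exact hf ▸ hpos 1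
        · exact hf ▸ p1
      · have e : cofY Y (f 0) + cofY Y (f 1) + cofY Y (f 2)
            = cofY Y (gs 0) + cofY Y (gs 1) + cofY Y (gs 2 - gs 0) := by rw [hf]; rfl
        rw [e, cofY_sub]
        have := hpos 0
        linarith
      · have eA : (fun (m : Fin 3) (j : Fin 3) => ((f m j : ℚ)))
            = Matrix.updateRow A 2 (A 2 - A 0) := by
          subst hf
          funext m j
          fin_cases m
          · show ((gs 0 j : ℚ)) = Matrix.updateRow A 2 (A 2 - A 0) 0 j
            rw [Matrix.updateRow_ne (by decide : (0 : Fin 3) ≠ 2)]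
          · show ((gs 1 j : ℚ)) = Matrix.updateRow A 2 (A 2 - A 0) 1 j
            rw [Matrix.updateRow_ne (by decide : (1 : Fin 3) ≠ 2)]
          · show (((gs 2 - gs 0) j : ℚ)) = Matrix.updateRow A 2 (A 2 - A 0) 2 j
            rw [Matrix.updateRow_self]
            simp [hA]
        rw [eA, hdet_sub 2 0 (by decide)]
        exact hdet
  obtain ⟨hfpos, hfsum, hfdet⟩ := hmain
  -- transfer to gs' through the permutation σ
  have hpos' : ∀ i, 0 < cofY Y (gs' i) := by
    intro i
    rw [hσ i]
    exact hfpos (σ i)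
  have hsum' : cofY Y (gs' 0) + cofY Y (gs' 1) + cofY Y (gs' 2)
      = cofY Y (f 0) + cofY Y (f 1) + cofY Y (f 2) := by
    have e1 : ∑ i, cofY Y (gs' i) = ∑ i, cofY Y (f (σ i)) :=
      Finset.sum_congr rfl (fun i _ => by rw [hσ i])
    have e2 : ∑ i, cofY Y (f (σ i)) = ∑ i, cofY Y (f i) :=
      Equiv.sum_comp σ (fun i => cofY Y (f i))
    have e3 := e1.trans e2
    rw [Fin.sum_univ_three, Fin.sum_univ_three] at e3
    exact e3
  have hdet' : Matrix.det (fun i j => ((gs' i j : ℚ))) ≠ 0 := by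
    have eA : (fun (i : Fin 3) (j : Fin 3) => ((gs' i j : ℚ)))
        = Matrix.submatrix (α := ℚ) (fun m j => ((f m j : ℚ))) σ id := by
      funext i j
      show ((gs' i j : ℚ)) = ((f (σ i) j : ℚ))
      rw [hσ i]
    rw [eA]
    erw [Matrix.det_permute]
    intro hc
    rcases Int.units_eq_one_or (Equiv.Perm.sign σ) with hs | hs <;> rw [hs] at hc <;>
      simp at hc <;> exact hfdet hc
  have hsorted : cofY Y (gs' 0) ≤ cofY Y (gs' 1) ∧ cofY Y (gs' 1) ≤ cofY Y (gs' 2) := by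
    rw [norm_colL_eq Y hY gs' 0, norm_colL_eq Y hY gs' 1] at hs01
    rw [norm_colL_eq Y hY gs' 1, norm_colL_eq Y hY gs' 2] at hs12
    have h1 := (div_le_div_iff_of_pos_right hY).mp hs01
    have h2 := (div_le_div_iff_of_pos_right hY).mp hs12
    rw [abs_of_pos (hpos' 0), abs_of_pos (hpos' 1)] at h1
    rw [abs_of_pos (hpos' 1), abs_of_pos (hpos' 2)] at h2
    exact ⟨h1, h2⟩
  exact ⟨hdet', hpos', hsorted.1, hsorted.2, by rw [hsum']; exact hfsum⟩


private lemma abs_apply_le_norm (x : E3) (j : Fin 3) : |x j| ≤ ‖x‖ := by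
  rw [EuclideanSpace.norm_eq]
  have h1 : |x j| = Real.sqrt (‖x j‖^2) := by
    rw [Real.norm_eq_abs, Real.sqrt_sq_eq_abs, abs_abs]
  rw [h1]
  apply Real.sqrt_le_sqrt
  exact Finset.single_le_sum (f := fun i => ‖x i‖^2) (fun i _ => by positivity)
    (Finset.mem_univ j)

private lemma toR3_eq_colP_add_colL (Y : E3) (g : Fin 3 → Fin 3 → ℤ) (i : Fin 3) :
    toR3 (g i) = colP Y g i + colL Y g i := by
  rw [colP, colL, projPl]
  abel

/-- Lemma 2: the projections on the plane become arbitrarily large. -/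
theorem sva_proj_tendsto_atTop (Y : E3) (h0 : 0 < Y 0) (h01 : Y 0 < Y 1) (h12 : Y 1 < Y 2)
    (hind : LinearIndependent ℚ fun i : Fin 3 => Y i)
    (g : ℕ → Fin 3 → Fin 3 → ℤ) (hg : IsSVARun Y g) :
    Filter.Tendsto (fun s => max3 fun i => ‖colP Y (g s) i‖) Filter.atTop Filter.atTop := by
  classical
  obtain ⟨hg0, hstep⟩ := hg
  have hYne : Y ≠ 0 := by
    intro h
    rw [h] at h0
    exact lt_irrefl (0 : ℝ) h0
  have hY : 0 < ‖Y‖ := norm_pos_iff.mpr hYne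
  have hker : ∀ w : Fin 3 → ℤ, cofY Y w = 0 → w = 0 := by
    intro w hw
    have h2 := Fintype.linearIndependent_iff.mp hind (fun i => (w i : ℚ)) ?_
    · funext i
      have h3 := h2 i
      exact_mod_cast h3
    · have e : ∑ i, ((w i : ℚ) • Y i) = cofY Y w := by
        apply Finset.sum_congr rfl
        intro i _
        rw [Rat.smul_def]
        push_cast
        ring
      rw [e, hw]
  have inv : ∀ s, (Matrix.det (fun i j => ((g s i j : ℚ))) ≠ 0) ∧
      (∀ i, 0 < cofY Y (g s i)) ∧
      (cofY Y (g s 0) ≤ cofY Y (g s 1)) ∧ (cofY Y (g s 1) ≤ cofY Y (g s 2)) := by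
    intro s
    induction s with
    | zero =>
      have hc0 : ∀ i, cofY Y (g 0 i) = Y i := by
        intro i
        have e : ∀ j, ((g 0 i j : ℝ)) * Y j = if i = j then Y j else 0 := by
          intro j
          rw [hg0]
          by_cases h : i = j <;> simp [h]
        simp only [cofY, e]
        rw [Finset.sum_ite_eq]
        simp
      have hdet0 : (fun (i : Fin 3) (j : Fin 3) => ((g 0 i j : ℚ)))
          = (1 : Matrix (Fin 3) (Fin 3) ℚ) := by
        funext i j
        rw [hg0]
        by_cases h : i = j <;> simp [h, Matrix.one_apply]
      refine ⟨?_, ?_, ?_, ?_⟩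
      · rw [hdet0, Matrix.det_one]
        norm_num
      · intro i
        rw [hc0]
        fin_cases i
        · exact h0
        · exact lt_trans h0 h01
        · exact lt_trans (lt_trans h0 h01) h12
      · rw [hc0, hc0]
        exact le_of_lt h01
      · rw [hc0, hc0]
        exact le_of_lt h12
    | succ n ih =>
      obtain ⟨hdet, hpos, ha, hb⟩ := ih
      have K := sva_step_key Y hY hker (g n) (g (n+1)) (hstep n) hdet hpos ha hb
      exact ⟨K.1, K.2.1, K.2.2.1, K.2.2.2.1⟩
  have hdec : ∀ s, cofY Y (g (s+1) 0) + cofY Y (g (s+1) 1) + cofY Y (g (s+1) 2)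
      < cofY Y (g s 0) + cofY Y (g s 1) + cofY Y (g s 2) := by
    intro s
    obtain ⟨hdet, hpos, ha, hb⟩ := inv s
    exact (sva_step_key Y hY hker (g s) (g (s+1)) (hstep s) hdet hpos ha hb).2.2.2.2
  have hanti : StrictAnti (fun s => cofY Y (g s 0) + cofY Y (g s 1) + cofY Y (g s 2)) :=
    strictAnti_nat_of_succ_lt hdec
  have hcof_le : ∀ s i, cofY Y (g s i) ≤ cofY Y (g 0 0) + cofY Y (g 0 1) + cofY Y (g 0 2) := by
    intro s i
    have h1 : cofY Y (g s 0) + cofY Y (g s 1) + cofY Y (g s 2)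
        ≤ cofY Y (g 0 0) + cofY Y (g 0 1) + cofY Y (g 0 2) := by
      rcases Nat.eq_zero_or_pos s with h | h
      · rw [h]
      · exact le_of_lt (hanti h)
    have hp := (inv s).2.1
    have p0 := hp 0
    have p1 := hp 1
    have p2 := hp 2
    fin_cases i
    · show cofY Y (g s 0) ≤ cofY Y (g 0 0) + cofY Y (g 0 1) + cofY Y (g 0 2)
      linarith
    · show cofY Y (g s 1) ≤ cofY Y (g 0 0) + cofY Y (g 0 1) + cofY Y (g 0 2)
      linarith
    · show cofY Y (g s 2) ≤ cofY Y (g 0 0) + cofY Y (g 0 1) + cofY Y (g 0 2)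
      linarith
  by_contra hnot
  rw [Filter.tendsto_atTop_atTop] at hnot
  push_neg at hnot
  obtain ⟨b, hb⟩ := hnot
  have hTinf : {n : ℕ | max3 (fun i => ‖colP Y (g n) i‖) < b}.Infinite := by
    rw [← Nat.frequently_atTop_iff_infinite, Filter.frequently_atTop]
    intro a
    obtain ⟨n, hn, hp⟩ := hb a
    exact ⟨n, hn, hp⟩
  set S0 : ℝ := cofY Y (g 0 0) + cofY Y (g 0 1) + cofY Y (g 0 2) with hS0
  set M : ℤ := ⌈b + S0 / ‖Y‖⌉ with hM
  have hbound : ∀ n ∈ {n : ℕ | max3 (fun i => ‖colP Y (g n) i‖) < b},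
      ∀ i j, g n i j ∈ Set.Icc (-M) M := by
    intro n hn i j
    have hmaxlt : max3 (fun i => ‖colP Y (g n) i‖) < b := hn
    have hmax : ∀ i', ‖colP Y (g n) i'‖ < b := by
      intro i'
      have h3 : ‖colP Y (g n) i'‖ ≤ max3 (fun i => ‖colP Y (g n) i‖) := by
        simp only [max3]
        fin_cases i'
        · exact le_max_left _ _
        · exact le_trans (le_max_left _ _) (le_max_right _ _)
        · exact le_trans (le_max_right _ _) (le_max_right _ _)
      linarith
    have hL : ‖colL Y (g n) i‖ ≤ S0 / ‖Y‖ := by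
      rw [norm_colL_eq Y hY]
      apply (div_le_div_iff_of_pos_right hY).mpr
      rw [abs_of_pos ((inv n).2.1 i)]
      exact hcof_le n i
    have hnorm : ‖toR3 (g n i)‖ ≤ b + S0 / ‖Y‖ := by
      have e : toR3 (g n i) = colP Y (g n) i + colL Y (g n) i :=
        toR3_eq_colP_add_colL Y (g n) i
      calc ‖toR3 (g n i)‖ ≤ ‖colP Y (g n) i‖ + ‖colL Y (g n) i‖ := by
            rw [e]; exact norm_add_le _ _
        _ ≤ b + S0 / ‖Y‖ := add_le_add (le_of_lt (hmax i)) hL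
    have habs : |((g n i j : ℝ))| ≤ b + S0 / ‖Y‖ := by
      have h4 : |toR3 (g n i) j| ≤ ‖toR3 (g n i)‖ := abs_apply_le_norm _ _
      have h5 : toR3 (g n i) j = ((g n i j : ℝ)) := rfl
      rw [h5] at h4
      linarith
    have hCM : b + S0 / ‖Y‖ ≤ (M : ℝ) := Int.le_ceil _
    rw [Set.mem_Icc]
    constructor
    · have h6 : -(M : ℝ) ≤ ((g n i j : ℝ)) := by
        have h7 := neg_abs_le ((g n i j : ℝ))
        linarith
      exact_mod_cast h6
    · have h6 : ((g n i j : ℝ)) ≤ (M : ℝ) :=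
        le_trans (le_trans (le_abs_self _) habs) hCM
      exact_mod_cast h6
  have hbox : (Set.pi Set.univ (fun _ : Fin 3 =>
      Set.pi Set.univ (fun _ : Fin 3 => Set.Icc (-M) M))).Finite :=
    Set.Finite.pi (fun _ => Set.Finite.pi (fun _ => Set.finite_Icc _ _))
  have hmaps : Set.MapsTo g {n : ℕ | max3 (fun i => ‖colP Y (g n) i‖) < b}
      (Set.pi Set.univ (fun _ : Fin 3 =>
        Set.pi Set.univ (fun _ : Fin 3 => Set.Icc (-M) M))) := by
    intro n hn
    rw [Set.mem_pi]
    intro i _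
    rw [Set.mem_pi]
    intro j _
    exact hbound n hn i j
  obtain ⟨s, hs, t, ht, hst, heq⟩ := hTinf.exists_ne_map_eq_of_mapsTo hmaps hbox
  have hSeq : cofY Y (g s 0) + cofY Y (g s 1) + cofY Y (g s 2)
      = cofY Y (g t 0) + cofY Y (g t 1) + cofY Y (g t 2) := by rw [heq]
  rcases hst.lt_or_gt with h | h
  · have h2 : cofY Y (g t 0) + cofY Y (g t 1) + cofY Y (g t 2)
        < cofY Y (g s 0) + cofY Y (g s 1) + cofY Y (g s 2) := hanti h
    linarith
  · have h2 : cofY Y (g s 0) + cofY Y (g s 1) + cofY Y (g s 2)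
        < cofY Y (g t 0) + cofY Y (g t 1) + cofY Y (g t 2) := hanti h
    linarith

end
end

section
/- Let X = (x₀, x₁, x₂) ∈ ℝ³ with 0 < x₀ < x₁ < x₂ and x₀, x₁, x₂ linearly independent over ℚ. Suppose a run of the Smallest Vector Algorithm started at X satisfies X⁽ˢ⁺ᵖ⁾ = λ · X⁽ˢ⁾ for some natural numbers s and p with p > 0 and some real number λ. Then λ cannot be a quadratic real number, i.e. λ is not algebraic of degree 2 over ℚ. -/
open Filter InnerProductGeometry Polynomial

noncomputable section

lemma cofVec_eq (X : E3) (g : Fin 3 → Fin 3 → ℤ) (i : Fin 3) :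
    cofVec X g i = ∑ j, (g i j : ℝ) * X j := by
  simp [cofVec, toR3, toE3, PiLp.inner_apply, RCLike.inner_apply, conj_trivial, mul_comm]

lemma cofVec_sub (X : E3) (g : Fin 3 → Fin 3 → ℤ) (h : Fin 3 → Fin 3 → ℤ)
    (i : Fin 3) (a b : Fin 3) (hh : h i = g a - g b) :
    cofVec X h i = cofVec X g a - cofVec X g b := by
  simp only [cofVec_eq, hh]
  rw [← Finset.sum_sub_distrib]
  congr 1; funext j; push_cast [Pi.sub_apply]; ring

lemma cofVec_congr (X : E3) (g : Fin 3 → Fin 3 → ℤ) (h : Fin 3 → Fin 3 → ℤ)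
    (i : Fin 3) (a : Fin 3) (hh : h i = g a) : cofVec X h i = cofVec X g a := by
  simp only [cofVec, hh]

lemma range_fin3 (f : Fin 3 → ℝ) : Set.range f = {f 0, f 1, f 2} := by
  ext x; constructor
  · rintro ⟨i, rfl⟩; fin_cases i <;> simp
  · rintro (rfl | rfl | rfl) <;> exact ⟨_, rfl⟩

lemma span_subA (a b c : ℝ) :
    Submodule.span ℚ ({a, b - a, c} : Set ℝ) = Submodule.span ℚ {a, b, c} := by
  apply le_antisymm <;> rw [Submodule.span_le] <;> rintro x (hx | hx | hx) <;> rw [hx]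
  · exact Submodule.subset_span (by simp)
  · exact Submodule.sub_mem _ (Submodule.subset_span (by simp)) (Submodule.subset_span (by simp))
  · exact Submodule.subset_span (by simp)
  · exact Submodule.subset_span (by simp)
  · have h : b = (b - a) + a := by ring
    rw [h]
    exact Submodule.add_mem _ (Submodule.subset_span (by simp)) (Submodule.subset_span (by simp))
  · exact Submodule.subset_span (by simp)

lemma span_subB (a b c : ℝ) :
    Submodule.span ℚ ({a, b, c - b} : Set ℝ) = Submodule.span ℚ {a, b, c} := by
  apply le_antisymm <;> rw [Submodule.span_le] <;> rintro x (hx | hx | hx) <;> rw [hx]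
  · exact Submodule.subset_span (by simp)
  · exact Submodule.subset_span (by simp)
  · exact Submodule.sub_mem _ (Submodule.subset_span (by simp)) (Submodule.subset_span (by simp))
  · exact Submodule.subset_span (by simp)
  · exact Submodule.subset_span (by simp)
  · have h : c = (c - b) + b := by ring
    rw [h]
    exact Submodule.add_mem _ (Submodule.subset_span (by simp)) (Submodule.subset_span (by simp))

lemma span_subC (a b c : ℝ) :
    Submodule.span ℚ ({a, b, c - a} : Set ℝ) = Submodule.span ℚ {a, b, c} := by
  apply le_antisymm <;> rw [Submodule.span_le] <;> rintro x (hx | hx | hx) <;> rw [hx]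
  · exact Submodule.subset_span (by simp)
  · exact Submodule.subset_span (by simp)
  · exact Submodule.sub_mem _ (Submodule.subset_span (by simp)) (Submodule.subset_span (by simp))
  · exact Submodule.subset_span (by simp)
  · exact Submodule.subset_span (by simp)
  · have h : c = (c - a) + a := by ring
    rw [h]
    exact Submodule.add_mem _ (Submodule.subset_span (by simp)) (Submodule.subset_span (by simp))

set_option synthInstance.maxHeartbeats 1000000 in
set_option maxHeartbeats 2000000 in
/-- Lemma 3: in a loop, the ratio `λ` cannot be a quadratic number. -/
theorem sva_loop_not_quadratic (Y : E3) (h0 : 0 < Y 0) (h01 : Y 0 < Y 1) (h12 : Y 1 < Y 2)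
    (hind : LinearIndependent ℚ fun i : Fin 3 => Y i)
    (g : ℕ → Fin 3 → Fin 3 → ℤ) (hg : IsSVARun Y g)
    (s p : ℕ) (hp : 0 < p) (lam : ℝ)
    (hloop : ∀ i, cofVec Y (g (s + p)) i = lam * cofVec Y (g s) i) :
    ¬ (IsAlgebraic ℚ lam ∧ (minpoly ℚ lam).natDegree = 2) := by
  rintro ⟨halg, hdeg⟩
  have hint : IsIntegral ℚ lam := halg.isIntegral
  set V : Submodule ℚ ℝ := Submodule.span ℚ (Set.range fun i : Fin 3 => Y i) with hVdef
  -- the rational span of the cofactor vector is constant along the run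
  have hspan : ∀ t, Submodule.span ℚ (Set.range (cofVec Y (g t))) = V := by
    intro t; induction t with
    | zero =>
      have hbase : cofVec Y (g 0) = fun i : Fin 3 => Y i := by
        funext i
        rw [cofVec_eq]
        simp [hg.1, apply_ite, ite_mul, Finset.sum_ite_eq]
      rw [hbase]
    | succ t ih =>
      obtain ⟨f, hf, σ, hσ, -, -⟩ := hg.2 t
      have hcomp : cofVec Y (g (t + 1)) = cofVec Y f ∘ σ := by
        funext i; simp only [cofVec, Function.comp_apply, hσ i]
      rw [hcomp, σ.surjective.range_comp, ← ih, range_fin3 (cofVec Y f),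
        range_fin3 (cofVec Y (g t))]
      rcases hf with ⟨-, hf⟩ | ⟨-, hf⟩ | ⟨-, hf⟩
      · rw [cofVec_congr Y (g t) f 0 0 (by rw [hf]; simp),
          cofVec_sub Y (g t) f 1 1 0 (by rw [hf]; simp),
          cofVec_congr Y (g t) f 2 2 (by rw [hf]; simp)]
        exact span_subA _ _ _
      · rw [cofVec_congr Y (g t) f 0 0 (by rw [hf]; simp),
          cofVec_congr Y (g t) f 1 1 (by rw [hf]; simp),
          cofVec_sub Y (g t) f 2 2 1 (by rw [hf]; simp)]
        exact span_subB _ _ _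
      · rw [cofVec_congr Y (g t) f 0 0 (by rw [hf]; simp),
          cofVec_congr Y (g t) f 1 1 (by rw [hf]; simp),
          cofVec_sub Y (g t) f 2 2 0 (by rw [hf]; simp)]
        exact span_subC _ _ _
  -- V is stable under multiplication by lam
  have hstab : ∀ v ∈ V, lam * v ∈ V := by
    intro v hv
    rw [← hspan s] at hv
    induction hv using Submodule.span_induction with
    | mem x hx =>
      obtain ⟨i, rfl⟩ := hx
      rw [← hloop i, ← hspan (s + p)]
      exact Submodule.subset_span ⟨i, rfl⟩
    | zero => simp
    | add x y hx hy ihx ihy => rw [mul_add]; exact V.add_mem ihx ihy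
    | smul q x hx ihx =>
      have h : lam * (q • x) = q • (lam * x) := by
        rw [Rat.smul_def, Rat.smul_def]; ring
      rw [h]; exact V.smul_mem q ihx
  -- V is stable under multiplication by anything in ℚ(lam)
  have hmul : ∀ k : ℝ, k ∈ Algebra.adjoin ℚ ({lam} : Set ℝ) → ∀ v ∈ V, k * v ∈ V := by
    intro k hk
    induction hk using Algebra.adjoin_induction with
    | mem x hx =>
      rw [Set.mem_singleton_iff] at hx
      subst hx; exact hstab
    | algebraMap r =>
      intro v hv
      have h : (algebraMap ℚ ℝ r) * v = r • v := (Algebra.smul_def r v).symm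
      rw [h]; exact V.smul_mem r hv
    | add x y hx hy ihx ihy =>
      intro v hv; rw [add_mul]; exact V.add_mem (ihx v hv) (ihy v hv)
    | mul x y hx hy ihx ihy =>
      intro v hv; rw [mul_assoc]; exact ihx _ (ihy v hv)
  set K : IntermediateField ℚ ℝ := IntermediateField.adjoin ℚ {lam} with hKdef
  have hfd : FiniteDimensional ℚ K := IntermediateField.adjoin.finiteDimensional hint
  have hKrank : Module.finrank ℚ K = 2 := by
    rw [hKdef, IntermediateField.adjoin.finrank hint, hdeg]
  have hmemK : ∀ k : K, (k : ℝ) ∈ Algebra.adjoin ℚ ({lam} : Set ℝ) := by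
    intro k
    have h := IntermediateField.adjoin_simple_toSubalgebra_of_isAlgebraic halg
    rw [← h]
    exact k.2
  set V' : Submodule K ℝ :=
    { carrier := V
      add_mem' := fun h1 h2 => V.add_mem h1 h2
      zero_mem' := V.zero_mem
      smul_mem' := by
        intro c x hx
        have h : c • x = (c : ℝ) * x := by
          rw [Algebra.smul_def]; rfl
        rw [h]
        exact hmul _ (hmemK c) x hx } with hV'def
  have hVeq : V'.restrictScalars ℚ = V := rfl
  have h3 : Module.finrank ℚ V = 3 := by
    rw [hVdef, finrank_span_eq_card hind]; simp
  have hV'3 : Module.finrank ℚ V' = 3 := by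
    have h1 : Module.finrank ℚ (V'.restrictScalars ℚ) = Module.finrank ℚ V' :=
      ((Submodule.restrictScalarsEquiv ℚ (↥K) ℝ V').restrictScalars ℚ).finrank_eq
    rw [← h1, hVeq, h3]
  have hmulrank : Module.finrank ℚ K * Module.finrank K V' = Module.finrank ℚ V' :=
    Module.finrank_mul_finrank ℚ (↥K) (↥V')
  rw [hKrank, hV'3] at hmulrank
  omega

end
end

section
/- Let X = (x₀, x₁, x₂) ∈ ℝ³ with 0 < x₀ < x₁ < x₂ and x₀, x₁, x₂ linearly independent over ℚ, consider any run of the Smallest Vector Algorithm started at X, fix s, and let H'⁽ˢ⁾ be the convex hull of {g₀'⁽ˢ⁾, g₁'⁽ˢ⁾, g₂'⁽ˢ⁾, −g₀'⁽ˢ⁾, −g₁'⁽ˢ⁾, −g₂'⁽ˢ⁾} in P. Then for every integer vector h ∈ ℤ³ whose projection h' lies in H'⁽ˢ⁾: (i) if h ≠ 0 then ‖h''‖ ≥ ‖g₀''⁽ˢ⁾‖; (ii) if h is not an integer multiple of g₀⁽ˢ⁾ then ‖h''‖ ≥ ‖g₁''⁽ˢ⁾‖; (iii) if h is not of the form n₀·g₀⁽ˢ⁾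 + n₁·g₁⁽ˢ⁾ with n₀, n₁ ∈ ℤ then ‖h''‖ ≥ ‖g₂''⁽ˢ⁾‖. Consequently, if h₀, h₁, h₂ ∈ ℤ³ are linearly independent and each hᵢ' lies in H'⁽ˢ⁾, then max_{i=0,1,2} ‖hᵢ''‖ ≥ ‖g₂''⁽ˢ⁾‖. -/
open Filter InnerProductGeometry Polynomial

noncomputable section

/-- The hexagon `H'⁽ˢ⁾`: convex hull of `±g₀', ±g₁', ±g₂'` in the plane `X^⊥`. -/
def hexHull (Y : E3) (g : Fin 3 → Fin 3 → ℤ) : Set E3 :=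
  convexHull ℝ {colP Y g 0, colP Y g 1, colP Y g 2, -colP Y g 0, -colP Y g 1, -colP Y g 2}


/-! ### Auxiliary lemmas for the Prism Lemma -/

lemma toR3_apply (v : Fin 3 → ℤ) (i : Fin 3) : toR3 v i = (v i : ℝ) := rfl

lemma toR3_sub (u v : Fin 3 → ℤ) : toR3 (u - v) = toR3 u - toR3 v := by
  ext j
  simp only [toR3_apply, Pi.sub_apply, PiLp.sub_apply]
  push_cast; ring

lemma toR3_comb (n : Fin 3 → ℤ) (u : Fin 3 → (Fin 3 → ℤ)) :
    toR3 (n 0 • u 0 + n 1 • u 1 + n 2 • u 2)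
      = (n 0 : ℝ) • toR3 (u 0) + (n 1 : ℝ) • toR3 (u 1) + (n 2 : ℝ) • toR3 (u 2) := by
  ext j
  simp only [toR3_apply, Pi.add_apply, Pi.smul_apply, smul_eq_mul,
    PiLp.add_apply, PiLp.smul_apply]
  push_cast; ring

lemma sva_inner3 (u Y : E3) : (inner ℝ u Y : ℝ) = u 0 * Y 0 + u 1 * Y 1 + u 2 * Y 2 := by
  simp [PiLp.inner_apply, Fin.sum_univ_three]; ring

lemma sva_inner_comb (Y : E3) (c : Fin 3 → ℝ) (v : Fin 3 → E3) :
    (inner ℝ (c 0 • v 0 + c 1 • v 1 + c 2 • v 2) Y : ℝ)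
      = c 0 * (inner ℝ (v 0) Y : ℝ) + c 1 * (inner ℝ (v 1) Y : ℝ) + c 2 * (inner ℝ (v 2) Y : ℝ) := by
  rw [inner_add_left, inner_add_left, real_inner_smul_left, real_inner_smul_left,
    real_inner_smul_left]

lemma sva_norm_projL (Y : E3) (hY : Y ≠ 0) (v : E3) :
    ‖projL Y v‖ = |(inner ℝ v Y : ℝ)| / ‖Y‖ := by
  have h : ‖Y‖ ≠ 0 := norm_ne_zero_iff.mpr hY
  rw [projL, norm_smul, Real.norm_eq_abs, abs_div,
    abs_of_nonneg (by positivity : (0:ℝ) ≤ ‖Y‖^2)]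
  field_simp

lemma sva_projL_mono (Y : E3) (hY : Y ≠ 0) (u w : E3)
    (hle : |(inner ℝ u Y : ℝ)| ≤ |(inner ℝ w Y : ℝ)|) : ‖projL Y u‖ ≤ ‖projL Y w‖ := by
  have hp : 0 < ‖Y‖ := norm_pos_iff.mpr hY
  rw [sva_norm_projL Y hY, sva_norm_projL Y hY, div_eq_mul_inv, div_eq_mul_inv]
  exact mul_le_mul_of_nonneg_right hle (inv_nonneg.mpr hp.le)

lemma sva_projPl_comb (Y : E3) (c : Fin 3 → ℝ) (v : Fin 3 → E3) :
    c 0 • projPl Y (v 0) + c 1 • projPl Y (v 1) + c 2 • projPl Y (v 2)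
      = projPl Y (c 0 • v 0 + c 1 • v 1 + c 2 • v 2) := by
  simp only [projPl, projL, inner_add_left, real_inner_smul_left]
  module

lemma sva_decomp (Y v w : E3) (h : projPl Y v = projPl Y w) : ∃ r : ℝ, v = w + r • Y := by
  have h' : v - ((inner ℝ v Y : ℝ)/‖Y‖^2) • Y = w - ((inner ℝ w Y : ℝ)/‖Y‖^2) • Y := h
  refine ⟨(inner ℝ v Y : ℝ)/‖Y‖^2 - (inner ℝ w Y : ℝ)/‖Y‖^2, ?_⟩
  calc v = v - ((inner ℝ v Y : ℝ)/‖Y‖^2) • Y + ((inner ℝ v Y : ℝ)/‖Y‖^2) • Y := by abel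
  _ = w - ((inner ℝ w Y : ℝ)/‖Y‖^2) • Y + ((inner ℝ v Y : ℝ)/‖Y‖^2) • Y := by rw [h']
  _ = w + ((inner ℝ v Y : ℝ)/‖Y‖^2 - (inner ℝ w Y : ℝ)/‖Y‖^2) • Y := by
      rw [sub_smul]; abel

lemma sva_perm_sum3 {M : Type*} [AddCommMonoid M] (σ : Equiv.Perm (Fin 3)) (v : Fin 3 → M) :
    v (σ 0) + v (σ 1) + v (σ 2) = v 0 + v 1 + v 2 := by
  have h1 := Equiv.sum_comp σ v
  simpa [Fin.sum_univ_three] using h1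

/-- If the hexagon bound holds and one coefficient is positive, the other
coefficients are nonnegative. -/
lemma sva_nonneg_other (A B : ℝ) (hA : 0 < A) (hB : 0 < B) (N0 N1 : ℤ) (t R2 : ℝ)
    (hR2 : 0 ≤ R2)
    (hb : |(N0:ℝ) - t * A| + |(N1:ℝ) - t * B| + R2 ≤ 1) (hN : 1 ≤ N0) : 0 ≤ (N1:ℝ) := by
  have hN0R : (1:ℝ) ≤ (N0:ℝ) := by exact_mod_cast hN
  have e0 : (N0:ℝ) - t * A ≤ |(N0:ℝ) - t * A| := le_abs_self _
  have a0 : 0 ≤ |(N0:ℝ) - t * A| := abs_nonneg _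
  have a1 : 0 ≤ |(N1:ℝ) - t * B| := abs_nonneg _
  have ht : 0 ≤ t := by nlinarith
  by_contra hneg
  push_neg at hneg
  have hint : N1 ≤ -1 := by
    have : N1 < 0 := by exact_mod_cast hneg
    omega
  have hR : (N1:ℝ) ≤ -1 := by exact_mod_cast hint
  have e1 : t * B - (N1:ℝ) ≤ |(N1:ℝ) - t * B| := by
    rw [abs_sub_comm]; exact le_abs_self _
  have htB : t * B ≤ 0 := by linarith
  have hle : t ≤ 0 := by nlinarith
  have ht0 : t = 0 := le_antisymm hle ht
  subst ht0
  have l0 : (1:ℝ) ≤ |(N0:ℝ) - 0 * A| := by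
    rw [zero_mul, sub_zero]; exact hN0R.trans (le_abs_self _)
  have l1 : (1:ℝ) ≤ |(N1:ℝ) - 0 * B| := by
    rw [zero_mul, sub_zero, abs_of_nonpos (by linarith)]; linarith
  linarith

lemma sva_key1 (A B C X0 X1 X2 : ℝ) (hA : 0 < A) (hB : 0 < B) (hC : 0 < C)
    (hX0 : 0 ≤ X0) (hX1 : 0 ≤ X1) (hX2 : 0 ≤ X2) (N0 N1 N2 : ℤ) (t : ℝ)
    (hb : |(N0:ℝ) - t * A| + |(N1:ℝ) - t * B| + |(N2:ℝ) - t * C| ≤ 1) (hN : 1 ≤ N0) :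
    X0 ≤ (N0:ℝ) * X0 + (N1:ℝ) * X1 + (N2:ℝ) * X2 := by
  have h1 : 0 ≤ (N1:ℝ) :=
    sva_nonneg_other A B hA hB N0 N1 t (|(N2:ℝ) - t * C|) (abs_nonneg _) (by linarith) hN
  have h2 : 0 ≤ (N2:ℝ) :=
    sva_nonneg_other A C hA hC N0 N2 t (|(N1:ℝ) - t * B|) (abs_nonneg _) (by linarith) hN
  have hN0R : (1:ℝ) ≤ (N0:ℝ) := by exact_mod_cast hN
  have p1 : 0 ≤ (N1:ℝ) * X1 := mul_nonneg h1 hX1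
  have p2 : 0 ≤ (N2:ℝ) * X2 := mul_nonneg h2 hX2
  have p0 : 0 ≤ ((N0:ℝ) - 1) * X0 := mul_nonneg (by linarith) hX0
  nlinarith

lemma sva_key2 (A B C X0 X1 X2 : ℝ) (hA : 0 < A) (hB : 0 < B) (hC : 0 < C)
    (hX0 : 0 ≤ X0) (hX1 : 0 ≤ X1) (hX2 : 0 ≤ X2) (N0 N1 N2 : ℤ) (t : ℝ)
    (hb : |(N0:ℝ) - t * A| + |(N1:ℝ) - t * B| + |(N2:ℝ) - t * C| ≤ 1) (hN : N0 ≠ 0) :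
    X0 ≤ |(N0:ℝ) * X0 + (N1:ℝ) * X1 + (N2:ℝ) * X2| := by
  rcases hN.lt_or_gt with hlt | hgt
  · have hN' : 1 ≤ -N0 := by omega
    have e : ∀ (z D : ℝ), |(-z) - (-t) * D| = |z - t * D| := by
      intro z D
      rw [show (-z) - (-t) * D = -(z - t * D) by ring, abs_neg]
    have hb' : |((-N0:ℤ):ℝ) - (-t) * A| + |((-N1:ℤ):ℝ) - (-t) * B|
        + |((-N2:ℤ):ℝ) - (-t) * C| ≤ 1 := by
      push_cast
      rw [e, e, e]; exact hb
    have h1 := sva_key1 A B C X0 X1 X2 hA hB hC hX0 hX1 hX2 (-N0) (-N1) (-N2) (-t) hb' hN'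
    push_cast at h1
    have h3 : X0 ≤ -((N0:ℝ) * X0 + (N1:ℝ) * X1 + (N2:ℝ) * X2) := by linarith
    exact h3.trans (neg_le_abs _)
  · have h1 := sva_key1 A B C X0 X1 X2 hA hB hC hX0 hX1 hX2 N0 N1 N2 t hb (by omega)
    exact h1.trans (le_abs_self _)

/-- Any three pairs of integers admit a nontrivial simultaneous linear relation. -/
lemma sva_int_dep (p q : Fin 3 → ℤ) :
    ∃ c : Fin 3 → ℤ, (∃ i, c i ≠ 0) ∧
      c 0 * p 0 + c 1 * p 1 + c 2 * p 2 = 0 ∧ c 0 * q 0 + c 1 * q 1 + c 2 * q 2 = 0 := by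
  by_cases hA : p 1 * q 2 - p 2 * q 1 ≠ 0
  · exact ⟨![p 1 * q 2 - p 2 * q 1, -(p 0 * q 2 - p 2 * q 0), p 0 * q 1 - p 1 * q 0],
      ⟨0, by simpa using hA⟩, by simp; ring, by simp; ring⟩
  by_cases hB : p 0 * q 2 - p 2 * q 0 ≠ 0
  · exact ⟨![p 1 * q 2 - p 2 * q 1, -(p 0 * q 2 - p 2 * q 0), p 0 * q 1 - p 1 * q 0],
      ⟨1, by simp only [Matrix.cons_val_one, Matrix.head_cons]; exact neg_ne_zero.mpr hB⟩, by simp; ring, by simp; ring⟩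
  by_cases hC : p 0 * q 1 - p 1 * q 0 ≠ 0
  · exact ⟨![p 1 * q 2 - p 2 * q 1, -(p 0 * q 2 - p 2 * q 0), p 0 * q 1 - p 1 * q 0],
      ⟨2, by simpa using hC⟩, by simp; ring, by simp; ring⟩
  push_neg at hA hB hC
  by_cases hp0 : p 0 = 0
  · by_cases hp1 : p 1 = 0
    · by_cases hq0 : q 0 = 0
      · by_cases hq1 : q 1 = 0
        · exact ⟨![1, 0, 0], ⟨0, by simp⟩, by simp [hp0], by simp [hq0]⟩
        · exact ⟨![q 1, -(q 0), 0], ⟨0, by simpa using hq1⟩,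
            by simp [hp0, hp1], by simp; ring⟩
      · exact ⟨![q 1, -(q 0), 0], ⟨1, by simpa using hq0⟩,
          by simp [hp0, hp1], by simp; ring⟩
    · exact ⟨![p 1, -(p 0), 0], ⟨0, by simpa using hp1⟩, by simp; ring,
        by simp; linarith [hC]⟩
  · exact ⟨![p 1, -(p 0), 0], ⟨1, by simpa using hp0⟩, by simp; ring,
      by simp; linarith [hC]⟩

/-- Membership in the hexagon gives an `ℓ¹`-representation. -/
lemma sva_hex_mem (Y : E3) (G : Fin 3 → Fin 3 → ℤ) (z : E3) (hz : z ∈ hexHull Y G) :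
    ∃ c : Fin 3 → ℝ, |c 0| + |c 1| + |c 2| ≤ 1 ∧
      z = c 0 • colP Y G 0 + c 1 • colP Y G 1 + c 2 • colP Y G 2 := by
  set S : Set E3 := {w | ∃ c : Fin 3 → ℝ, |c 0| + |c 1| + |c 2| ≤ 1 ∧
      w = c 0 • colP Y G 0 + c 1 • colP Y G 1 + c 2 • colP Y G 2} with hS
  have hconv : Convex ℝ S := by
    intro w1 hw1 w2 hw2 pp qq hpp hqq hpq
    obtain ⟨c, hc, rfl⟩ := hw1
    obtain ⟨d, hd, rfl⟩ := hw2
    refine ⟨fun i => pp * c i + qq * d i, ?_, by module⟩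
    have tt : ∀ u v' : ℝ, |pp * u + qq * v'| ≤ pp * |u| + qq * |v'| := by
      intro u v'
      calc |pp * u + qq * v'| ≤ |pp * u| + |qq * v'| := abs_add_le _ _
      _ = pp * |u| + qq * |v'| := by
          rw [abs_mul, abs_mul, abs_of_nonneg hpp, abs_of_nonneg hqq]
    have m1 := mul_le_mul_of_nonneg_left hc hpp
    have m2 := mul_le_mul_of_nonneg_left hd hqq
    have := tt (c 0) (d 0); have := tt (c 1) (d 1); have := tt (c 2) (d 2)
    linarith
  have hgen : ({colP Y G 0, colP Y G 1, colP Y G 2,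
      -colP Y G 0, -colP Y G 1, -colP Y G 2} : Set E3) ⊆ S := by
    intro w hw
    simp only [Set.mem_insert_iff, Set.mem_singleton_iff] at hw
    rcases hw with rfl | rfl | rfl | rfl | rfl | rfl
    · exact ⟨![1, 0, 0], by norm_num [Matrix.cons_val_two, Matrix.tail_cons, Matrix.head_cons], by simp [Matrix.cons_val_two, Matrix.tail_cons, Matrix.head_cons]⟩
    · exact ⟨![0, 1, 0], by norm_num [Matrix.cons_val_two, Matrix.tail_cons, Matrix.head_cons], by simp [Matrix.cons_val_two, Matrix.tail_cons, Matrix.head_cons]⟩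
    · exact ⟨![0, 0, 1], by norm_num [Matrix.cons_val_two, Matrix.tail_cons, Matrix.head_cons], by simp [Matrix.cons_val_two, Matrix.tail_cons, Matrix.head_cons]⟩
    · exact ⟨![-1, 0, 0], by norm_num [Matrix.cons_val_two, Matrix.tail_cons, Matrix.head_cons], by simp [Matrix.cons_val_two, Matrix.tail_cons, Matrix.head_cons]⟩
    · exact ⟨![0, -1, 0], by norm_num [Matrix.cons_val_two, Matrix.tail_cons, Matrix.head_cons], by simp [Matrix.cons_val_two, Matrix.tail_cons, Matrix.head_cons]⟩
    · exact ⟨![0, 0, -1], by norm_num [Matrix.cons_val_two, Matrix.tail_cons, Matrix.head_cons], by simp [Matrix.cons_val_two, Matrix.tail_cons, Matrix.head_cons]⟩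
  exact convexHull_min hgen hconv hz

lemma sva_comb_inj (v : Fin 3 → E3) (hli : LinearIndependent ℝ v) (α β : Fin 3 → ℝ)
    (h : α 0 • v 0 + α 1 • v 1 + α 2 • v 2 = β 0 • v 0 + β 1 • v 1 + β 2 • v 2) :
    ∀ i, α i = β i := by
  have h2 := Fintype.linearIndependent_iff.mp hli (fun i => α i - β i) ?_
  · intro i; have := h2 i; linarith
  · rw [Fin.sum_univ_three]
    have e : (α 0 - β 0) • v 0 + (α 1 - β 1) • v 1 + (α 2 - β 2) • v 2
        = (α 0 • v 0 + α 1 • v 1 + α 2 • v 2) - (β 0 • v 0 + β 1 • v 1 + β 2 • v 2) := by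
      module
    rw [e, h, sub_self]

lemma sva_lin_indep (G : Fin 3 → Fin 3 → ℤ)
    (hspan : ∀ h : Fin 3 → ℤ, ∃ n : Fin 3 → ℤ, h = n 0 • G 0 + n 1 • G 1 + n 2 • G 2) :
    LinearIndependent ℝ (fun i => toR3 (G i)) := by
  apply linearIndependent_of_top_le_span_of_card_eq_finrank
  · rw [← (EuclideanSpace.basisFun (Fin 3) ℝ).toBasis.span_eq]
    apply Submodule.span_le.mpr
    rintro _ ⟨j, rfl⟩
    obtain ⟨n, hn⟩ := hspan (Pi.single j 1)
    have h1 : ((EuclideanSpace.basisFun (Fin 3) ℝ).toBasis : Fin 3 → E3) j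
        = toR3 (Pi.single j 1) := by
      simp only [OrthonormalBasis.coe_toBasis, EuclideanSpace.basisFun_apply]
      ext i
      rw [toR3_apply, EuclideanSpace.single_apply, Pi.single_apply]
      split <;> simp
    rw [h1, hn, toR3_comb]
    have m0 : toR3 (G 0) ∈ Submodule.span ℝ (Set.range fun i => toR3 (G i)) :=
      Submodule.subset_span ⟨0, rfl⟩
    have m1 : toR3 (G 1) ∈ Submodule.span ℝ (Set.range fun i => toR3 (G i)) :=
      Submodule.subset_span ⟨1, rfl⟩
    have m2 : toR3 (G 2) ∈ Submodule.span ℝ (Set.range fun i => toR3 (G i)) :=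
      Submodule.subset_span ⟨2, rfl⟩
    exact add_mem (add_mem (Submodule.smul_mem _ _ m0) (Submodule.smul_mem _ _ m1))
      (Submodule.smul_mem _ _ m2)
  · simp [finrank_euclideanSpace_fin]

/-- The inductive invariant of an SVA run. -/
def SVAInvariant (Y : E3) (G : Fin 3 → Fin 3 → ℤ) : Prop :=
  (∀ h : Fin 3 → ℤ, ∃ n : Fin 3 → ℤ, h = n 0 • G 0 + n 1 • G 1 + n 2 • G 2) ∧
  (∃ a : Fin 3 → ℝ, (∀ i, 0 < a i) ∧
      a 0 • toR3 (G 0) + a 1 • toR3 (G 1) + a 2 • toR3 (G 2) = Y) ∧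
  (∀ i, 0 ≤ (inner ℝ (toR3 (G i)) Y : ℝ)) ∧
  (inner ℝ (toR3 (G 0)) Y : ℝ) ≤ (inner ℝ (toR3 (G 1)) Y : ℝ) ∧
  (inner ℝ (toR3 (G 1)) Y : ℝ) ≤ (inner ℝ (toR3 (G 2)) Y : ℝ)

lemma sva_inv_zero (Y : E3) (h0 : 0 < Y 0) (h01 : Y 0 < Y 1) (h12 : Y 1 < Y 2)
    (G : Fin 3 → Fin 3 → ℤ) (hid : ∀ i j, G i j = if i = j then 1 else 0) :
    SVAInvariant Y G := by
  have hx : ∀ i, (inner ℝ (toR3 (G i)) Y : ℝ) = Y i := by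
    intro i
    rw [sva_inner3]
    fin_cases i <;> simp [toR3_apply, hid]
  refine ⟨?_, ⟨fun i => Y i, ?_, ?_⟩, ?_, ?_, ?_⟩
  · intro h
    refine ⟨h, ?_⟩
    funext j
    simp only [Pi.add_apply, Pi.smul_apply, smul_eq_mul, hid]
    fin_cases j <;> simp
  · intro i
    fin_cases i
    · exact h0
    · exact lt_trans h0 h01
    · exact lt_trans (lt_trans h0 h01) h12
  · ext j
    simp only [PiLp.add_apply, PiLp.smul_apply, toR3_apply, hid, smul_eq_mul]
    fin_cases j <;> simp
  · intro i; rw [hx i]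
    fin_cases i
    · exact h0.le
    · exact (lt_trans h0 h01).le
    · exact (lt_trans (lt_trans h0 h01) h12).le
  · rw [hx 0, hx 1]; exact h01.le
  · rw [hx 1, hx 2]; exact h12.le

lemma sva_div_cancel {a b c : ℝ} (hpos : 0 < c) (h : a / c ≤ b / c) : a ≤ b := by
  have := mul_le_mul_of_nonneg_right h hpos.le
  rwa [div_mul_cancel₀ _ (ne_of_gt hpos), div_mul_cancel₀ _ (ne_of_gt hpos)] at this

lemma sva_inv_step (Y : E3) (hY : Y ≠ 0) (G G' : Fin 3 → Fin 3 → ℤ)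
    (ih : SVAInvariant Y G) (hst : SVAStep Y G G') : SVAInvariant Y G' := by
  obtain ⟨hspan, ⟨a, hapos, haeq⟩, hxnn, hx01, hx12⟩ := ih
  obtain ⟨f, hcase, σ, hσ, hs01, hs12⟩ := hst
  have hf : (∀ h : Fin 3 → ℤ, ∃ n : Fin 3 → ℤ, h = n 0 • f 0 + n 1 • f 1 + n 2 • f 2) ∧
      (∃ b : Fin 3 → ℝ, (∀ i, 0 < b i) ∧
        b 0 • toR3 (f 0) + b 1 • toR3 (f 1) + b 2 • toR3 (f 2) = Y) ∧
      (∀ i, 0 ≤ (inner ℝ (toR3 (f i)) Y : ℝ)) := by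
    rcases hcase with ⟨-, rfl⟩ | ⟨-, rfl⟩ | ⟨-, rfl⟩
    · refine ⟨?_, ⟨![a 0 + a 1, a 1, a 2], ?_, ?_⟩, ?_⟩
      · intro h
        obtain ⟨n, hn⟩ := hspan h
        refine ⟨![n 0 + n 1, n 1, n 2], ?_⟩
        rw [hn]; simp only [Matrix.cons_val_zero, Matrix.cons_val_one, Matrix.head_cons,
          Matrix.cons_val_two, Matrix.tail_cons]
        module
      · intro i; fin_cases i
        · exact add_pos (hapos 0) (hapos 1)
        · exact hapos 1
        · exact hapos 2
      · simp only [Matrix.cons_val_zero, Matrix.cons_val_one, Matrix.head_cons,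
          Matrix.cons_val_two, Matrix.tail_cons, toR3_sub]
        rw [← haeq]; module
      · intro i; fin_cases i
        · exact hxnn 0
        · show (0:ℝ) ≤ inner ℝ (toR3 (G 1 - G 0)) Y
          rw [toR3_sub, inner_sub_left]; linarith
        · exact hxnn 2
    · refine ⟨?_, ⟨![a 0, a 1 + a 2, a 2], ?_, ?_⟩, ?_⟩
      · intro h
        obtain ⟨n, hn⟩ := hspan h
        refine ⟨![n 0, n 1 + n 2, n 2], ?_⟩
        rw [hn]; simp only [Matrix.cons_val_zero, Matrix.cons_val_one, Matrix.head_cons,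
          Matrix.cons_val_two, Matrix.tail_cons]
        module
      · intro i; fin_cases i
        · exact hapos 0
        · exact add_pos (hapos 1) (hapos 2)
        · exact hapos 2
      · simp only [Matrix.cons_val_zero, Matrix.cons_val_one, Matrix.head_cons,
          Matrix.cons_val_two, Matrix.tail_cons, toR3_sub]
        rw [← haeq]; module
      · intro i; fin_cases i
        · exact hxnn 0
        · exact hxnn 1
        · show (0:ℝ) ≤ inner ℝ (toR3 (G 2 - G 1)) Y
          rw [toR3_sub, inner_sub_left]; linarith
    · refine ⟨?_, ⟨![a 0 + a 2, a 1, a 2], ?_, ?_⟩, ?_⟩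
      · intro h
        obtain ⟨n, hn⟩ := hspan h
        refine ⟨![n 0 + n 2, n 1, n 2], ?_⟩
        rw [hn]; simp only [Matrix.cons_val_zero, Matrix.cons_val_one, Matrix.head_cons,
          Matrix.cons_val_two, Matrix.tail_cons]
        module
      · intro i; fin_cases i
        · exact add_pos (hapos 0) (hapos 2)
        · exact hapos 1
        · exact hapos 2
      · simp only [Matrix.cons_val_zero, Matrix.cons_val_one, Matrix.head_cons,
          Matrix.cons_val_two, Matrix.tail_cons, toR3_sub]
        rw [← haeq]; module
      · intro i; fin_cases i
        · exact hxnn 0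
        · exact hxnn 1
        · show (0:ℝ) ≤ inner ℝ (toR3 (G 2 - G 0)) Y
          rw [toR3_sub, inner_sub_left]; linarith
  obtain ⟨hfspan, ⟨b, hbpos, hbeq⟩, hfxnn⟩ := hf
  have hG'xnn : ∀ i, 0 ≤ (inner ℝ (toR3 (G' i)) Y : ℝ) := by
    intro i; rw [hσ i]; exact hfxnn (σ i)
  have hnorm : ∀ i, ‖colL Y G' i‖ = (inner ℝ (toR3 (G' i)) Y : ℝ) / ‖Y‖ := by
    intro i
    rw [show colL Y G' i = projL Y (toR3 (G' i)) from rfl, sva_norm_projL Y hY,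
      abs_of_nonneg (hG'xnn i)]
  have hpos : 0 < ‖Y‖ := norm_pos_iff.mpr hY
  refine ⟨?_, ⟨fun i => b (σ i), fun i => hbpos (σ i), ?_⟩, hG'xnn, ?_, ?_⟩
  · intro h
    obtain ⟨n, hn⟩ := hfspan h
    refine ⟨fun i => n (σ i), ?_⟩
    rw [hσ 0, hσ 1, hσ 2]
    exact hn.trans (sva_perm_sum3 σ (fun i => n i • f i)).symm
  · rw [hσ 0, hσ 1, hσ 2]
    exact (sva_perm_sum3 σ (fun i => b i • toR3 (f i))).trans hbeq
  · have h := hs01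
    rw [hnorm 0, hnorm 1] at h
    exact sva_div_cancel hpos h
  · have h := hs12
    rw [hnorm 1, hnorm 2] at h
    exact sva_div_cancel hpos h
/-- the Prism Lemma. -/
theorem sva_prism_lemma (Y : E3) (h0 : 0 < Y 0) (h01 : Y 0 < Y 1) (h12 : Y 1 < Y 2)
    (hind : LinearIndependent ℚ fun i : Fin 3 => Y i)
    (g : ℕ → Fin 3 → Fin 3 → ℤ) (hg : IsSVARun Y g) (s : ℕ) :
    (∀ h : Fin 3 → ℤ, projPl Y (toR3 h) ∈ hexHull Y (g s) →
      (h ≠ 0 → ‖projL Y (toR3 (g s 0))‖ ≤ ‖projL Y (toR3 h)‖) ∧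
      ((∀ n : ℤ, h ≠ n • g s 0) → ‖projL Y (toR3 (g s 1))‖ ≤ ‖projL Y (toR3 h)‖) ∧
      ((∀ n₀ n₁ : ℤ, h ≠ n₀ • g s 0 + n₁ • g s 1) →
        ‖projL Y (toR3 (g s 2))‖ ≤ ‖projL Y (toR3 h)‖)) ∧
    ∀ h : Fin 3 → Fin 3 → ℤ, LinearIndependent ℤ (fun i : Fin 3 => h i) →
      (∀ i, projPl Y (toR3 (h i)) ∈ hexHull Y (g s)) →
      ‖projL Y (toR3 (g s 2))‖ ≤ max3 fun i => ‖projL Y (toR3 (h i))‖ := by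
  obtain ⟨hinit, hstep⟩ := hg
  have hYne : Y ≠ 0 := by
    intro hz; rw [hz] at h0; simp at h0
  have hInv : ∀ u, SVAInvariant Y (g u) := by
    intro u
    induction u with
    | zero => exact sva_inv_zero Y h0 h01 h12 (g 0) hinit
    | succ u ihu => exact sva_inv_step Y hYne (g u) (g (u + 1)) ihu (hstep u)
  obtain ⟨hspan, ⟨a, hapos, haeq⟩, hxnn, hx01, hx12⟩ := hInv s
  have hli := sva_lin_indep (g s) hspan
  have part1 : ∀ h : Fin 3 → ℤ, projPl Y (toR3 h) ∈ hexHull Y (g s) →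
      (h ≠ 0 → ‖projL Y (toR3 (g s 0))‖ ≤ ‖projL Y (toR3 h)‖) ∧
      ((∀ n : ℤ, h ≠ n • g s 0) → ‖projL Y (toR3 (g s 1))‖ ≤ ‖projL Y (toR3 h)‖) ∧
      ((∀ n₀ n₁ : ℤ, h ≠ n₀ • g s 0 + n₁ • g s 1) →
        ‖projL Y (toR3 (g s 2))‖ ≤ ‖projL Y (toR3 h)‖) := by
    intro h hmem
    obtain ⟨c, hc1, hceq⟩ := sva_hex_mem Y (g s) _ hmem
    have hceq' : projPl Y (toR3 h)
        = projPl Y (c 0 • toR3 (g s 0) + c 1 • toR3 (g s 1) + c 2 • toR3 (g s 2)) := by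
      rw [hceq]
      exact sva_projPl_comb Y c (fun i => toR3 (g s i))
    obtain ⟨r, hr⟩ := sva_decomp Y _ _ hceq'
    obtain ⟨n, hn⟩ := hspan h
    have e1 : toR3 h = (n 0 : ℝ) • toR3 (g s 0) + (n 1 : ℝ) • toR3 (g s 1)
        + (n 2 : ℝ) • toR3 (g s 2) := by
      rw [hn]; exact toR3_comb n (fun i => g s i)
    have e2 : toR3 h = (c 0 + r * a 0) • toR3 (g s 0) + (c 1 + r * a 1) • toR3 (g s 1)
        + (c 2 + r * a 2) • toR3 (g s 2) := by
      rw [hr, ← haeq]; module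
    have hcoord : ∀ i, ((n i : ℝ)) = c i + r * a i := by
      have := sva_comb_inj (fun i => toR3 (g s i)) hli (fun i => (n i : ℝ))
        (fun i => c i + r * a i) (e1.symm.trans e2)
      exact this
    have hb : |(n 0 : ℝ) - r * a 0| + |(n 1 : ℝ) - r * a 1| + |(n 2 : ℝ) - r * a 2| ≤ 1 := by
      have ec : ∀ i, (n i : ℝ) - r * a i = c i := by
        intro i; have := hcoord i; linarith
      rw [ec 0, ec 1, ec 2]; exact hc1
    have hinner : (inner ℝ (toR3 h) Y : ℝ)
        = (n 0 : ℝ) * (inner ℝ (toR3 (g s 0)) Y : ℝ) + (n 1 : ℝ) * (inner ℝ (toR3 (g s 1)) Y : ℝ)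
          + (n 2 : ℝ) * (inner ℝ (toR3 (g s 2)) Y : ℝ) := by
      rw [e1]
      exact sva_inner_comb Y (fun i => (n i : ℝ)) (fun i => toR3 (g s i))
    have hkey : ∀ k : Fin 3, n k ≠ 0 →
        (inner ℝ (toR3 (g s k)) Y : ℝ) ≤ |(inner ℝ (toR3 h) Y : ℝ)| := by
      intro k hk
      rw [hinner]
      fin_cases k
      · exact sva_key2 (a 0) (a 1) (a 2) _ _ _ (hapos 0) (hapos 1) (hapos 2)
          (hxnn 0) (hxnn 1) (hxnn 2) (n 0) (n 1) (n 2) r hb hk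
      · have h' := sva_key2 (a 1) (a 0) (a 2) (inner ℝ (toR3 (g s 1)) Y : ℝ)
          (inner ℝ (toR3 (g s 0)) Y : ℝ) (inner ℝ (toR3 (g s 2)) Y : ℝ)
          (hapos 1) (hapos 0) (hapos 2) (hxnn 1) (hxnn 0) (hxnn 2)
          (n 1) (n 0) (n 2) r (by linarith) hk
        rwa [show (n 1 : ℝ) * (inner ℝ (toR3 (g s 1)) Y : ℝ)
            + (n 0 : ℝ) * (inner ℝ (toR3 (g s 0)) Y : ℝ)
            + (n 2 : ℝ) * (inner ℝ (toR3 (g s 2)) Y : ℝ)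
          = (n 0 : ℝ) * (inner ℝ (toR3 (g s 0)) Y : ℝ)
            + (n 1 : ℝ) * (inner ℝ (toR3 (g s 1)) Y : ℝ)
            + (n 2 : ℝ) * (inner ℝ (toR3 (g s 2)) Y : ℝ) from by ring] at h'
      · have h' := sva_key2 (a 2) (a 0) (a 1) (inner ℝ (toR3 (g s 2)) Y : ℝ)
          (inner ℝ (toR3 (g s 0)) Y : ℝ) (inner ℝ (toR3 (g s 1)) Y : ℝ)
          (hapos 2) (hapos 0) (hapos 1) (hxnn 2) (hxnn 0) (hxnn 1)
          (n 2) (n 0) (n 1) r (by linarith) hk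
        rwa [show (n 2 : ℝ) * (inner ℝ (toR3 (g s 2)) Y : ℝ)
            + (n 0 : ℝ) * (inner ℝ (toR3 (g s 0)) Y : ℝ)
            + (n 1 : ℝ) * (inner ℝ (toR3 (g s 1)) Y : ℝ)
          = (n 0 : ℝ) * (inner ℝ (toR3 (g s 0)) Y : ℝ)
            + (n 1 : ℝ) * (inner ℝ (toR3 (g s 1)) Y : ℝ)
            + (n 2 : ℝ) * (inner ℝ (toR3 (g s 2)) Y : ℝ) from by ring] at h'
    refine ⟨?_, ?_, ?_⟩
    · intro hne
      have hex : ∃ k, n k ≠ 0 := by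
        by_contra hno
        push_neg at hno
        apply hne
        rw [hn, hno 0, hno 1, hno 2]; simp
      obtain ⟨k, hk⟩ := hex
      refine sva_projL_mono Y hYne _ _ ?_
      rw [abs_of_nonneg (hxnn 0)]
      refine le_trans ?_ (hkey k hk)
      fin_cases k
      · exact le_refl _
      · exact hx01
      · exact le_trans hx01 hx12
    · intro hne
      have hex : n 1 ≠ 0 ∨ n 2 ≠ 0 := by
        by_contra hno
        push_neg at hno
        exact hne (n 0) (by rw [hn, hno.1, hno.2]; simp)
      refine sva_projL_mono Y hYne _ _ ?_
      rw [abs_of_nonneg (hxnn 1)]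
      rcases hex with hk | hk
      · exact hkey 1 hk
      · exact le_trans hx12 (hkey 2 hk)
    · intro hne
      have hk : n 2 ≠ 0 := by
        intro hz
        exact hne (n 0) (n 1) (by rw [hn, hz]; simp)
      refine sva_projL_mono Y hYne _ _ ?_
      rw [abs_of_nonneg (hxnn 2)]
      exact hkey 2 hk
  refine ⟨part1, ?_⟩
  intro h hliZ hhex
  have hmax : ∀ (f : Fin 3 → ℝ) (i : Fin 3), f i ≤ max3 f := by
    intro f i
    fin_cases i <;> simp [max3, le_max_iff]
  have hex_i : ∃ i, ∀ n₀ n₁ : ℤ, h i ≠ n₀ • g s 0 + n₁ • g s 1 := by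
    by_contra hc
    push_neg at hc
    choose p q hpq using hc
    obtain ⟨c, ⟨i0, hi0⟩, hcp, hcq⟩ := sva_int_dep p q
    have hrel : c 0 • h 0 + c 1 • h 1 + c 2 • h 2 = 0 := by
      rw [hpq 0, hpq 1, hpq 2]
      have e : c 0 • (p 0 • g s 0 + q 0 • g s 1) + c 1 • (p 1 • g s 0 + q 1 • g s 1)
          + c 2 • (p 2 • g s 0 + q 2 • g s 1)
        = (c 0 * p 0 + c 1 * p 1 + c 2 * p 2) • g s 0
          + (c 0 * q 0 + c 1 * q 1 + c 2 * q 2) • g s 1 := by module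
      rw [e, hcp, hcq]; simp
    have := Fintype.linearIndependent_iff.mp hliZ c (by rw [Fin.sum_univ_three]; exact hrel)
    exact hi0 (this i0)
  obtain ⟨i, hi⟩ := hex_i
  exact le_trans ((part1 (h i) (hhex i)).2.2 hi)
    (hmax (fun i => ‖projL Y (toR3 (h i))‖) i)
end
end

section
/- Let α, β be real numbers such that 1, α, β are linearly independent over ℚ, and set X = (1, α, β). For an integer vector h = (m, n, p), write X∙h = m + nα + pβ. Then the following six assertions are equivalent: (a) the infimum over integer triples (m,n,p) with (n,p) ≠ (0,0) of |X∙h| · (max(|n|,|p|))² is positive; (b) the infimum over integer triples (m,n,p) with m ≠ 0 of |m| · (max(|αm−n|,|βm−p|))² is positive; (a') the infimum over nonzero integer triples (m,n,p) of |X∙h| · (max(|m|,|n|,|p|))² is positive; (b') the infimum over nonzero integer triples (m,n,p) of max(|m|,|n|,|p|) · (max(|αm−n|,|βm−p|))² is positive; (A) the infimum over nonzero h ∈ ℤ³ of |X∙h| · ‖h‖² is positive; (B) the infimum over nonzero integer triples (m,n,p) of ‖h‖ · ((αm−n)² + (βm−p)²) is positive. -/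
open Filter InnerProductGeometry Polynomial

noncomputable section

section TransferenceAux
open MeasureTheory Submodule
open scoped ENNReal


theorem linear_forms_thm (A : Matrix (Fin 3) (Fin 3) ℝ) (hA : A.det ≠ 0)
    (c : Fin 3 → ℝ) (hc : ∀ i, 0 < c i) (hdet : |A.det| < c 0 * c 1 * c 2) :
    ∃ x : Fin 3 → ℤ, x ≠ 0 ∧ ∀ i, |∑ j, A i j * (x j : ℝ)| < c i := by
  classical
  set b := Pi.basisFun ℝ (Fin 3) with hb
  set f : (Fin 3 → ℝ) →ₗ[ℝ] (Fin 3 → ℝ) := Matrix.toLin' A with hf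
  have hfdet : LinearMap.det f ≠ 0 := by rwa [hf, LinearMap.det_toLin']
  set box : Set (Fin 3 → ℝ) := Set.univ.pi fun i => Set.Ioo (-(c i)) (c i) with hbox
  set s : Set (Fin 3 → ℝ) := f ⁻¹' box with hs
  have hmem : ∀ v : Fin 3 → ℝ, v ∈ s ↔ ∀ i, |∑ j, A i j * v j| < c i := by
    intro v
    simp only [hs, Set.mem_preimage, hbox, Set.mem_pi, Set.mem_univ, Set.mem_Ioo, true_implies,
      abs_lt, hf, Matrix.toLin'_apply, Matrix.mulVec, dotProduct]
  have hvolbox : volume box = ENNReal.ofReal (2 * c 0 * (2 * c 1) * (2 * c 2)) := by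
    rw [hbox, volume_pi_pi]
    rw [Fin.prod_univ_three]
    simp only [Real.volume_Ioo]
    rw [← ENNReal.ofReal_mul (by linarith [hc 0] : (0:ℝ) ≤ c 0 - -c 0),
      ← ENNReal.ofReal_mul (by nlinarith [hc 0, hc 1] : (0:ℝ) ≤ (c 0 - -c 0) * (c 1 - -c 1))]
    congr 1
    ring
  have hvols : volume s = ENNReal.ofReal |(LinearMap.det f)⁻¹| * volume box :=
    Measure.addHaar_preimage_linearMap volume hfdet box
  have h_fund := ZSpan.isAddFundamentalDomain' b (volume : Measure (Fin 3 → ℝ))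
  have hcnt : Countable (span ℤ (Set.range b)).toAddSubgroup := by
    change Countable (span ℤ (Set.range b)); infer_instance
  have hFvol : volume (ZSpan.fundamentalDomain b) = 1 := by
    rw [ZSpan.fundamentalDomain_pi_basisFun, volume_pi_pi]
    simp
  have hlt : volume (ZSpan.fundamentalDomain b) * 2 ^ Module.finrank ℝ (Fin 3 → ℝ) < volume s := by
    rw [hFvol, hvols, hvolbox, one_mul, hf, LinearMap.det_toLin']
    have h2 : 0 < |A.det| := abs_pos.mpr hA
    have key : (8 : ℝ) < |A.det|⁻¹ * (2 * c 0 * (2 * c 1) * (2 * c 2)) := by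
      rw [inv_mul_eq_div, lt_div_iff₀ h2]
      nlinarith [hc 0, hc 1, hc 2, hdet]
    have hrk : Module.finrank ℝ (Fin 3 → ℝ) = 3 := by simp
    rw [hrk, abs_inv, ← ENNReal.ofReal_mul (by positivity)]
    calc (2 : ℝ≥0∞) ^ 3 = ENNReal.ofReal 8 := by rw [ENNReal.ofReal_ofNat]; norm_num
      _ < _ := (ENNReal.ofReal_lt_ofReal_iff
          (lt_trans (by norm_num) key)).mpr key
  obtain ⟨⟨x, hx⟩, h_nz, h_mem⟩ := exists_ne_zero_mem_lattice_of_measure_mul_two_pow_lt_measure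
    h_fund (fun v hv => by rw [hmem] at hv ⊢; intro i; simpa using hv i)
    (((convex_pi fun i _ => convex_Ioo _ _)).linear_preimage f) hlt
  rw [Submodule.mem_toAddSubgroup] at hx
  have hxi : ∀ i, ∃ z : ℤ, (z : ℝ) = x i := by
    intro i
    obtain ⟨z, hz⟩ := (b.mem_span_iff_repr_mem ℤ x).mp hx i
    exact ⟨z, by simpa [hb] using hz⟩
  choose y hy using hxi
  refine ⟨y, ?_, ?_⟩
  · intro h0
    apply h_nz
    have hx0 : x = 0 := funext fun i => by
      rw [← hy i, h0]; simp
    exact Subtype.ext (by simpa using hx0)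
  · intro i
    have h := (hmem x).mp h_mem i
    simp only [← hy] at h
    exact h




lemma intAbsLt {k : ℤ} (h : |(k:ℝ)| < 1) : k = 0 := by
  have h2 : |k| < 1 := by exact_mod_cast h
  rcases abs_cases k with ⟨h3, _⟩ | ⟨h3, _⟩ <;> omega

lemma intOneLe {k : ℤ} (h : k ≠ 0) : (1:ℝ) ≤ |(k:ℝ)| := by
  have : (1:ℤ) ≤ |k| := Int.one_le_abs h
  exact_mod_cast this

lemma Lne {α β : ℝ} (hind : LinearIndependent ℚ ![(1:ℝ), α, β]) {m n p : ℤ}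
    (h : ¬(m = 0 ∧ n = 0 ∧ p = 0)) : (m:ℝ) + n*α + p*β ≠ 0 := by
  intro h0
  rw [Fintype.linearIndependent_iff] at hind
  have h3 := hind ![(m:ℚ), (n:ℚ), (p:ℚ)] (by
    rw [Fin.sum_univ_three]
    simp only [Matrix.cons_val_zero, Matrix.cons_val_one, Matrix.head_cons,
      Matrix.cons_val_two, Matrix.tail_cons, Rat.smul_def]
    push_cast
    linarith [h0])
  refine h ⟨?_, ?_, ?_⟩
  · have := h3 0; simp only [Matrix.cons_val_zero] at this; exact_mod_cast this
  · have := h3 1; simp only [Matrix.cons_val_one, Matrix.head_cons, Matrix.cons_val_zero] at this; exact_mod_cast this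
  · have := h3 2; simp only [Matrix.cons_val_two, Matrix.tail_cons, Matrix.head_cons] at this
    exact_mod_cast this

lemma norm_toR3_sq (m n p : ℤ) :
    ‖toR3 ![m, n, p]‖ ^ 2 = (m:ℝ)^2 + (n:ℝ)^2 + (p:ℝ)^2 := by
  have h : ‖toR3 ![m,n,p]‖ = Real.sqrt ((m:ℝ)^2 + (n:ℝ)^2 + (p:ℝ)^2) := by
    rw [toR3, toE3, EuclideanSpace.norm_eq]
    congr 1
    rw [Fin.sum_univ_three]
    simp [sq_abs]
  rw [h, Real.sq_sqrt (by positivity)]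

/-- (a) implies (b). -/
lemma hard12 {α β : ℝ} (hind : LinearIndependent ℚ ![(1 : ℝ), α, β])
    (H : ∃ c : ℝ, 0 < c ∧ ∀ m n p : ℤ, ¬(n = 0 ∧ p = 0) →
      c ≤ |(m : ℝ) + n * α + p * β| * (max |(n : ℝ)| |(p : ℝ)|) ^ 2) :
    ∃ c : ℝ, 0 < c ∧ ∀ m n p : ℤ, m ≠ 0 →
      c ≤ |(m : ℝ)| * (max |α * m - n| |β * m - p|) ^ 2 := by
  obtain ⟨c, hc, hP⟩ := H
  refine ⟨min 1 (c^2/128), by positivity, ?_⟩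
  intro m n p hm
  by_contra hlt
  push_neg at hlt
  set E := max |α * (m:ℝ) - n| |β * (m:ℝ) - p| with hE
  have hE0 : 0 ≤ E := le_trans (abs_nonneg _) (le_max_left _ _)
  have hQ1 : (1:ℝ) ≤ |(m:ℝ)| := intOneLe hm
  have hQ0 : (0:ℝ) < |(m:ℝ)| := lt_of_lt_of_le one_pos hQ1
  set s := Real.sqrt (2 * |(m:ℝ)|) with hs
  have hs2 : s^2 = 2 * |(m:ℝ)| := Real.sq_sqrt (by positivity)
  have hs0 : 0 < s := Real.sqrt_pos.mpr (by positivity)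
  obtain ⟨x, hx0, hxb⟩ := linear_forms_thm
    (Matrix.of ![![(m:ℝ), n, p], ![0,1,0], ![0,0,1]])
    (by
      rw [Matrix.det_fin_three]
      simp only [Matrix.of_apply, Matrix.cons_val', Matrix.cons_val_zero, Matrix.cons_val_one,
        Matrix.head_cons, Matrix.cons_val_two, Matrix.tail_cons, Matrix.empty_val',
        Matrix.cons_val_fin_one, Matrix.head_fin_const]
      push_cast
      ring_nf
      exact_mod_cast hm)
    ![1, s, s]
    (by intro i; fin_cases i <;> simp [hs0])
    (by
      rw [Matrix.det_fin_three]
      simp only [Matrix.of_apply, Matrix.cons_val', Matrix.cons_val_zero, Matrix.cons_val_one,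
        Matrix.head_cons, Matrix.cons_val_two, Matrix.tail_cons, Matrix.empty_val',
        Matrix.cons_val_fin_one, Matrix.head_fin_const]
      ring_nf
      nlinarith [hQ0, hs2, hs0])
  have h0 := hxb 0
  have h1 := hxb 1
  have h2 := hxb 2
  rw [Fin.sum_univ_three] at h0 h1 h2
  simp only [Matrix.of_apply, Matrix.cons_val', Matrix.cons_val_zero, Matrix.cons_val_one,
    Matrix.head_cons, Matrix.cons_val_two, Matrix.tail_cons, Matrix.empty_val',
    Matrix.cons_val_fin_one, Matrix.head_fin_const, one_mul, zero_mul, add_zero, zero_add] at h0 h1 h2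
  -- h0 : |m * x0 + n * x1 + p * x2| < 1, h1 : |(x 1 : ℝ)| < s, h2 : |(x 2:ℝ)| < s
  have hz : m * x 0 + n * x 1 + p * x 2 = 0 := by
    apply intAbsLt
    push_cast
    convert h0 using 2
  have hnp : ¬(x 1 = 0 ∧ x 2 = 0) := by
    rintro ⟨e1, e2⟩
    have : m * x 0 = 0 := by rw [e1, e2] at hz; linarith [hz]
    have hx00 : x 0 = 0 := by
      rcases mul_eq_zero.mp this with h | h
      · exact absurd h hm
      · exact h
    apply hx0
    funext i
    fin_cases i <;> simp [hx00, e1, e2]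
  have hid : (m:ℝ) * ((x 0 : ℝ) + x 1 * α + x 2 * β)
      = (x 1 : ℝ) * (α * m - n) + (x 2 : ℝ) * (β * m - p)
        + ((m * x 0 + n * x 1 + p * x 2 : ℤ) : ℝ) := by
    push_cast
    ring
  rw [hz] at hid
  push_cast at hid
  have key := hP (x 0) (x 1) (x 2) hnp
  set L' := |(x 0 : ℝ) + x 1 * α + x 2 * β| with hL'
  set M' := max |(x 1 : ℝ)| |(x 2 : ℝ)| with hM'
  have hM's : M' < s := max_lt h1 h2
  have hM'0 : 0 ≤ M' := le_trans (abs_nonneg _) (le_max_left _ _)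
  -- |m| * L' ≤ 2 * s * E
  have habs : |(m:ℝ)| * L' ≤ 2 * s * E := by
    have e1 : |(m:ℝ)| * L' = |(x 1 : ℝ) * (α * m - n) + (x 2 : ℝ) * (β * m - p)| := by
      rw [hL', ← abs_mul, hid]; ring_nf
    rw [e1]
    have b1 : |α * (m:ℝ) - n| ≤ E := le_max_left _ _
    have b2 : |β * (m:ℝ) - p| ≤ E := le_max_right _ _
    calc |(x 1 : ℝ) * (α * m - n) + (x 2 : ℝ) * (β * m - p)|
        ≤ |(x 1 : ℝ)| * |α * m - n| + |(x 2 : ℝ)| * |β * m - p| := by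
          refine le_trans (abs_add_le _ _) ?_
          rw [abs_mul, abs_mul]
      _ ≤ s * E + s * E := by
          apply add_le_add <;>
            exact mul_le_mul (le_of_lt (by assumption)) (by assumption) (abs_nonneg _) (le_of_lt hs0)
      _ = 2 * s * E := by ring
  -- c ≤ L' * M'^2 ≤ L' * s^2 = 2 * |m| * L' ≤ 4 * s * E
  have hLnn : 0 ≤ L' := abs_nonneg _
  have hM2 : M' ^ 2 ≤ s ^ 2 := pow_le_pow_left₀ hM'0 hM's.le 2
  have step1 : c ≤ L' * s^2 := le_trans key (mul_le_mul_of_nonneg_left hM2 hLnn)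
  have step2 : c ≤ 4 * s * E := by
    rw [hs2] at step1
    nlinarith
  -- (s*E)^2 = 2*|m|*E^2 < 2 * (c^2/128) = c^2/64
  have hsE : s * E < c / 8 := by
    have hq : |(m:ℝ)| * E ^ 2 < c^2/128 := lt_of_lt_of_le hlt (min_le_right _ _)
    have : (s*E)^2 < (c/8)^2 := by
      rw [mul_pow, hs2]
      nlinarith
    exact lt_of_pow_lt_pow_left₀ 2 (by positivity) this
  linarith

/-- (b) implies (a). -/
lemma hard21 {α β : ℝ} (hind : LinearIndependent ℚ ![(1 : ℝ), α, β])
    (H : ∃ c : ℝ, 0 < c ∧ ∀ m n p : ℤ, m ≠ 0 →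
      c ≤ |(m : ℝ)| * (max |α * m - n| |β * m - p|) ^ 2) :
    ∃ c : ℝ, 0 < c ∧ ∀ m n p : ℤ, ¬(n = 0 ∧ p = 0) →
      c ≤ |(m : ℝ) + n * α + p * β| * (max |(n : ℝ)| |(p : ℝ)|) ^ 2 := by
  obtain ⟨c, hc, hP⟩ := H
  refine ⟨min (1/2) (c^2/128), by positivity, ?_⟩
  intro m n p hnp
  by_contra hlt
  push_neg at hlt
  have hne : (m:ℝ) + n * α + p * β ≠ 0 :=
    Lne hind (by rintro ⟨_, h2, h3⟩; exact hnp ⟨h2, h3⟩)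
  set lam := |(m:ℝ) + n * α + p * β| with hlam
  have hlam0 : 0 < lam := abs_pos.mpr hne
  set M := max |(n:ℝ)| |(p:ℝ)| with hM
  have hM1 : (1:ℝ) ≤ M := by
    rcases Decidable.not_and_iff_or_not.mp hnp with h | h
    · exact le_trans (intOneLe h) (le_max_left _ _)
    · exact le_trans (intOneLe h) (le_max_right _ _)
  have hMlam : lam * M ^ 2 < min (1/2) (c^2/128) := hlt
  have hhalf : lam < 1/2 := by
    have := lt_of_lt_of_le hMlam (min_le_left _ _)
    nlinarith
  set s := Real.sqrt (2 * lam) with hs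
  have hs2 : s ^ 2 = 2 * lam := Real.sq_sqrt (by positivity)
  have hs0 : 0 < s := Real.sqrt_pos.mpr (by positivity)
  have hs1 : s < 1 := by nlinarith
  set A : Matrix (Fin 3) (Fin 3) ℝ := Matrix.of ![![(m:ℝ), n, p], ![α,-1,0], ![β,0,-1]] with hA
  have hdetval : A.det = (m:ℝ) + n * α + p * β := by
    rw [hA, Matrix.det_fin_three]
    simp only [Matrix.of_apply, Matrix.cons_val', Matrix.cons_val_zero, Matrix.cons_val_one,
      Matrix.head_cons, Matrix.cons_val_two, Matrix.tail_cons, Matrix.empty_val',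
      Matrix.cons_val_fin_one, Matrix.head_fin_const]
    ring
  obtain ⟨x, hx0, hxb⟩ := linear_forms_thm A
    (by rw [hdetval]; exact hne)
    ![1, s, s]
    (by intro i; fin_cases i <;> simp [hs0])
    (by
      simp only [Matrix.cons_val_zero, Matrix.cons_val_one, Matrix.head_cons,
        Matrix.cons_val_two, Matrix.tail_cons]
      rw [hdetval, ← hlam, show (1:ℝ) * s * s = s^2 by ring, hs2]
      linarith)
  have h0 := hxb 0
  have h1 := hxb 1
  have h2 := hxb 2
  rw [Fin.sum_univ_three] at h0 h1 h2
  simp only [hA, Matrix.of_apply, Matrix.cons_val', Matrix.cons_val_zero, Matrix.cons_val_one,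
    Matrix.head_cons, Matrix.cons_val_two, Matrix.tail_cons, Matrix.empty_val',
    Matrix.cons_val_fin_one, Matrix.head_fin_const, one_mul, zero_mul, add_zero, zero_add,
    neg_mul, neg_one_mul] at h0 h1 h2
  -- h0 : |m x0 + n x1 + p x2| < 1 ; h1 : |α * x0 - x1| < s ; h2 : |β * x0 - x2| < s
  have hz : m * x 0 + n * x 1 + p * x 2 = 0 := by
    apply intAbsLt
    push_cast
    convert h0 using 2
  have hq : x 0 ≠ 0 := by
    intro e0
    have e1 : x 1 = 0 := by
      apply intAbsLt
      have : |α * ((x 0 : ℤ) : ℝ) + -(x 1 : ℝ)| < s := h1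
      rw [e0] at this
      simp only [Int.cast_zero, mul_zero, zero_add, abs_neg] at this
      linarith
    have e2 : x 2 = 0 := by
      apply intAbsLt
      have : |β * ((x 0 : ℤ) : ℝ) + -(x 2 : ℝ)| < s := h2
      rw [e0] at this
      simp only [Int.cast_zero, mul_zero, zero_add, abs_neg] at this
      linarith
    apply hx0
    funext i
    fin_cases i <;> simp [e0, e1, e2]
  have hid : ((x 0 : ℤ) : ℝ) * ((m:ℝ) + n * α + p * β)
      = (n : ℝ) * (α * x 0 - x 1) + (p : ℝ) * (β * x 0 - x 2)
        + ((m * x 0 + n * x 1 + p * x 2 : ℤ) : ℝ) := by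
    push_cast
    ring
  rw [hz] at hid
  push_cast at hid
  set E' := max |α * ((x 0 : ℤ):ℝ) - x 1| |β * ((x 0 : ℤ):ℝ) - x 2| with hE'
  have key := hP (x 0) (x 1) (x 2) hq
  rw [← hE'] at key
  have hE's : E' < s := by
    apply max_lt
    · have : |α * ((x 0:ℤ):ℝ) + -(x 1 : ℝ)| < s := h1
      rw [show α * ((x 0:ℤ):ℝ) + -(x 1:ℝ) = α * ((x 0:ℤ):ℝ) - (x 1:ℝ) by ring] at this
      exact this
    · have : |β * ((x 0:ℤ):ℝ) + -(x 2 : ℝ)| < s := h2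
      rw [show β * ((x 0:ℤ):ℝ) + -(x 2:ℝ) = β * ((x 0:ℤ):ℝ) - (x 2:ℝ) by ring] at this
      exact this
  have hE'0 : 0 ≤ E' := le_trans (abs_nonneg _) (le_max_left _ _)
  have hq1 : (1:ℝ) ≤ |((x 0:ℤ):ℝ)| := intOneLe hq
  -- |x0| * lam ≤ 2 * M * s
  have habs : |((x 0:ℤ):ℝ)| * lam ≤ 2 * M * s := by
    have e1 : |((x 0:ℤ):ℝ)| * lam = |(n : ℝ) * (α * x 0 - x 1) + (p : ℝ) * (β * x 0 - x 2)| := by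
      rw [hlam, ← abs_mul, hid, add_zero]
    rw [e1]
    have b1 : |(n:ℝ)| ≤ M := le_max_left _ _
    have b2 : |(p:ℝ)| ≤ M := le_max_right _ _
    have c1 : |α * ((x 0:ℤ):ℝ) - x 1| < s := hE's.trans_le' (le_max_left _ _) |>.trans_le le_rfl
    have c2 : |β * ((x 0:ℤ):ℝ) - x 2| < s := hE's.trans_le' (le_max_right _ _) |>.trans_le le_rfl
    have hM0 : 0 ≤ M := le_trans zero_le_one hM1
    calc |(n : ℝ) * (α * x 0 - x 1) + (p : ℝ) * (β * x 0 - x 2)|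
        ≤ |(n:ℝ)| * |α * ((x 0:ℤ):ℝ) - x 1| + |(p:ℝ)| * |β * ((x 0:ℤ):ℝ) - x 2| := by
          refine le_trans (abs_add_le _ _) ?_
          rw [abs_mul, abs_mul]
      _ ≤ M * s + M * s := by
          apply add_le_add <;>
            exact mul_le_mul (by assumption) (le_of_lt (by assumption)) (abs_nonneg _) hM0
      _ = 2 * M * s := by ring
  have hE2 : E' ^ 2 ≤ s ^ 2 := pow_le_pow_left₀ hE'0 hE's.le 2
  have step1 : c ≤ |((x 0:ℤ):ℝ)| * s ^ 2 :=
    le_trans key (mul_le_mul_of_nonneg_left hE2 (abs_nonneg _))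
  have step2 : c ≤ 4 * M * s := by
    rw [hs2] at step1
    nlinarith
  have hsM : M * s < c / 8 := by
    have hq2 : lam * M ^ 2 < c^2/128 := lt_of_lt_of_le hlt (min_le_right _ _)
    have : (M*s)^2 < (c/8)^2 := by
      rw [mul_pow, hs2]
      nlinarith
    exact lt_of_pow_lt_pow_left₀ 2 (by positivity) this
  linarith

lemma easy13 {α β : ℝ}
    (H : ∃ c : ℝ, 0 < c ∧ ∀ m n p : ℤ, ¬(n = 0 ∧ p = 0) →
      c ≤ |(m : ℝ) + n * α + p * β| * (max |(n : ℝ)| |(p : ℝ)|) ^ 2) :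
    ∃ c : ℝ, 0 < c ∧ ∀ m n p : ℤ, ¬(m = 0 ∧ n = 0 ∧ p = 0) →
      c ≤ |(m : ℝ) + n * α + p * β| * (max (max |(m : ℝ)| |(n : ℝ)|) |(p : ℝ)|) ^ 2 := by
  obtain ⟨c, hc, hP⟩ := H
  refine ⟨min c 1, lt_min hc one_pos, ?_⟩
  intro m n p h
  by_cases hnp : n = 0 ∧ p = 0
  · obtain ⟨rfl, rfl⟩ := hnp
    have hm : m ≠ 0 := by tauto
    have h1 : (1:ℝ) ≤ |(m:ℝ)| := intOneLe hm
    simp only [Int.cast_zero, zero_mul, add_zero, abs_zero]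
    have he : max (max |(m:ℝ)| 0) 0 = |(m:ℝ)| := by
      rw [max_eq_left (le_max_of_le_left (abs_nonneg _)), max_eq_left (abs_nonneg _)]
    rw [he]
    nlinarith [min_le_right c 1]
  · have hkey := hP m n p hnp
    have hle : max |(n:ℝ)| |(p:ℝ)| ≤ max (max |(m:ℝ)| |(n:ℝ)|) |(p:ℝ)| :=
      max_le_max (le_max_right _ _) le_rfl
    have h2 : (max |(n:ℝ)| |(p:ℝ)|)^2 ≤ (max (max |(m:ℝ)| |(n:ℝ)|) |(p:ℝ)|)^2 :=
      pow_le_pow_left₀ (by positivity) hle 2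
    have h3 := mul_le_mul_of_nonneg_left h2 (abs_nonneg ((m:ℝ) + n*α + p*β))
    exact le_trans (min_le_left c 1) (le_trans hkey h3)

lemma easy31 {α β : ℝ}
    (H : ∃ c : ℝ, 0 < c ∧ ∀ m n p : ℤ, ¬(m = 0 ∧ n = 0 ∧ p = 0) →
      c ≤ |(m : ℝ) + n * α + p * β| * (max (max |(m : ℝ)| |(n : ℝ)|) |(p : ℝ)|) ^ 2) :
    ∃ c : ℝ, 0 < c ∧ ∀ m n p : ℤ, ¬(n = 0 ∧ p = 0) →
      c ≤ |(m : ℝ) + n * α + p * β| * (max |(n : ℝ)| |(p : ℝ)|) ^ 2 := by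
  obtain ⟨c, hc, hP⟩ := H
  set C := 1 + |α| + |β| with hC
  have hC1 : (1:ℝ) ≤ C := by rw [hC]; linarith [abs_nonneg α, abs_nonneg β]
  have hC0 : (0:ℝ) < C := lt_of_lt_of_le one_pos hC1
  refine ⟨min 1 (c / C^2), lt_min one_pos (by positivity), ?_⟩
  intro m n p hnp
  set lam := |(m : ℝ) + n * α + p * β| with hlam
  set M := max |(n:ℝ)| |(p:ℝ)| with hM
  have hM1 : (1:ℝ) ≤ M := by
    rcases Decidable.not_and_iff_or_not.mp hnp with h | h
    · exact le_trans (intOneLe h) (le_max_left _ _)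
    · exact le_trans (intOneLe h) (le_max_right _ _)
  have hM0 : (0:ℝ) < M := lt_of_lt_of_le one_pos hM1
  have hbn : |(n:ℝ)| ≤ M := le_max_left _ _
  have hbp : |(p:ℝ)| ≤ M := le_max_right _ _
  by_cases hm : |(m:ℝ)| ≤ C * M
  · have hK : max (max |(m:ℝ)| |(n:ℝ)|) |(p:ℝ)| ≤ C * M := by
      apply max_le (max_le hm _) _
      · exact le_trans hbn (by nlinarith)
      · exact le_trans hbp (by nlinarith)
    have hkey := hP m n p (by rintro ⟨_, h2, h3⟩; exact hnp ⟨h2, h3⟩)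
    have h2 : (max (max |(m:ℝ)| |(n:ℝ)|) |(p:ℝ)|)^2 ≤ (C*M)^2 :=
      pow_le_pow_left₀ (by positivity) hK 2
    have h3 : c ≤ lam * (C*M)^2 :=
      le_trans hkey (mul_le_mul_of_nonneg_left h2 (abs_nonneg _))
    have h4 : c / C^2 ≤ lam * M^2 := by
      rw [div_le_iff₀ (by positivity)]
      nlinarith
    exact le_trans (min_le_right _ _) h4
  · push_neg at hm
    have htri : |(m:ℝ)| - |(n:ℝ)| * |α| - |(p:ℝ)| * |β| ≤ lam := by
      rw [hlam]
      have h1 : |(n:ℝ) * α| = |(n:ℝ)| * |α| := abs_mul _ _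
      have h2 : |(p:ℝ) * β| = |(p:ℝ)| * |β| := abs_mul _ _
      have := abs_add_le ((m:ℝ) + n * α + p * β) (-(n*α) - p*β)
      have h3 : |(m:ℝ)| ≤ lam + |(n:ℝ)*α| + |(p:ℝ)*β| := by
        calc |(m:ℝ)| = |((m:ℝ) + n*α + p*β) + (-(n*α) - p*β)| := by ring_nf
          _ ≤ |(m:ℝ) + n*α + p*β| + |(-(n*α) - p*β)| := abs_add_le _ _
          _ ≤ lam + (|(n:ℝ)*α| + |(p:ℝ)*β|) := by
              refine add_le_add le_rfl ?_
              calc |(-((n:ℝ)*α) - p*β)| = |(-((n:ℝ)*α)) + (-(p*β))| := by ring_nf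
                _ ≤ |(-((n:ℝ)*α))| + |(-((p:ℝ)*β))| := abs_add_le _ _
                _ = |(n:ℝ)*α| + |(p:ℝ)*β| := by rw [abs_neg, abs_neg]
          _ = lam + |(n:ℝ)*α| + |(p:ℝ)*β| := by ring
      rw [h1, h2] at h3
      linarith
    have hlamM : M ≤ lam := by
      have e1 : |(n:ℝ)| * |α| ≤ M * |α| := mul_le_mul_of_nonneg_right hbn (abs_nonneg _)
      have e2 : |(p:ℝ)| * |β| ≤ M * |β| := mul_le_mul_of_nonneg_right hbp (abs_nonneg _)
      have : C * M - M * |α| - M * |β| ≤ lam := by linarith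
      have : M = C * M - M * |α| - M * |β| := by rw [hC]; ring
      linarith
    have : (1:ℝ) ≤ lam * M^2 := by nlinarith
    exact le_trans (min_le_left _ _) this

lemma Ksq_bounds (m n p : ℤ) :
    (max (max |(m:ℝ)| |(n:ℝ)|) |(p:ℝ)|)^2 ≤ ‖toR3 ![m,n,p]‖^2 ∧
    ‖toR3 ![m,n,p]‖^2 ≤ 3 * (max (max |(m:ℝ)| |(n:ℝ)|) |(p:ℝ)|)^2 := by
  rw [norm_toR3_sq]
  set K := max (max |(m:ℝ)| |(n:ℝ)|) |(p:ℝ)| with hK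
  have hm : |(m:ℝ)| ≤ K := le_max_of_le_left (le_max_left _ _)
  have hn : |(n:ℝ)| ≤ K := le_max_of_le_left (le_max_right _ _)
  have hp : |(p:ℝ)| ≤ K := le_max_right _ _
  have h3 : K = |(m:ℝ)| ∨ K = |(n:ℝ)| ∨ K = |(p:ℝ)| := by
    rcases max_choice (max |(m:ℝ)| |(n:ℝ)|) |(p:ℝ)| with h | h
    · rcases max_choice |(m:ℝ)| |(n:ℝ)| with h' | h'
      · left; rw [hK, h, h']
      · right; left; rw [hK, h, h']
    · right; right; rw [hK, h]
  constructor
  · rcases h3 with h|h|h <;> rw [h] <;>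
      nlinarith [sq_abs ((m:ℝ)), sq_abs ((n:ℝ)), sq_abs ((p:ℝ)),
        sq_nonneg ((m:ℝ)), sq_nonneg ((n:ℝ)), sq_nonneg ((p:ℝ))]
  · nlinarith [pow_le_pow_left₀ (abs_nonneg ((m:ℝ))) hm 2,
      pow_le_pow_left₀ (abs_nonneg ((n:ℝ))) hn 2,
      pow_le_pow_left₀ (abs_nonneg ((p:ℝ))) hp 2,
      sq_abs ((m:ℝ)), sq_abs ((n:ℝ)), sq_abs ((p:ℝ))]

lemma easy35 {α β : ℝ}
    (H : ∃ c : ℝ, 0 < c ∧ ∀ m n p : ℤ, ¬(m = 0 ∧ n = 0 ∧ p = 0) →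
      c ≤ |(m : ℝ) + n * α + p * β| * (max (max |(m : ℝ)| |(n : ℝ)|) |(p : ℝ)|) ^ 2) :
    ∃ c : ℝ, 0 < c ∧ ∀ m n p : ℤ, ¬(m = 0 ∧ n = 0 ∧ p = 0) →
      c ≤ |(m : ℝ) + n * α + p * β| * ‖toR3 ![m, n, p]‖ ^ 2 := by
  obtain ⟨c, hc, hP⟩ := H
  refine ⟨c, hc, fun m n p h => ?_⟩
  have h1 := (Ksq_bounds m n p).1
  exact le_trans (hP m n p h) (mul_le_mul_of_nonneg_left h1 (abs_nonneg _))

lemma easy53 {α β : ℝ}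
    (H : ∃ c : ℝ, 0 < c ∧ ∀ m n p : ℤ, ¬(m = 0 ∧ n = 0 ∧ p = 0) →
      c ≤ |(m : ℝ) + n * α + p * β| * ‖toR3 ![m, n, p]‖ ^ 2) :
    ∃ c : ℝ, 0 < c ∧ ∀ m n p : ℤ, ¬(m = 0 ∧ n = 0 ∧ p = 0) →
      c ≤ |(m : ℝ) + n * α + p * β| * (max (max |(m : ℝ)| |(n : ℝ)|) |(p : ℝ)|) ^ 2 := by
  obtain ⟨c, hc, hP⟩ := H
  refine ⟨c/3, by positivity, fun m n p h => ?_⟩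
  have h1 := (Ksq_bounds m n p).2
  have h2 := mul_le_mul_of_nonneg_left h1 (abs_nonneg ((m:ℝ) + n*α + p*β))
  have h3 := hP m n p h
  nlinarith

lemma easy24 {α β : ℝ}
    (H : ∃ c : ℝ, 0 < c ∧ ∀ m n p : ℤ, m ≠ 0 →
      c ≤ |(m : ℝ)| * (max |α * m - n| |β * m - p|) ^ 2) :
    ∃ c : ℝ, 0 < c ∧ ∀ m n p : ℤ, ¬(m = 0 ∧ n = 0 ∧ p = 0) →
      c ≤ max (max |(m : ℝ)| |(n : ℝ)|) |(p : ℝ)| * (max |α * m - n| |β * m - p|) ^ 2 := by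
  obtain ⟨c, hc, hP⟩ := H
  refine ⟨min c 1, lt_min hc one_pos, fun m n p h => ?_⟩
  by_cases hm : m = 0
  · subst hm
    have hnp : ¬(n = 0 ∧ p = 0) := by tauto
    have hM1 : (1:ℝ) ≤ max |(n:ℝ)| |(p:ℝ)| := by
      rcases Decidable.not_and_iff_or_not.mp hnp with h' | h'
      · exact le_trans (intOneLe h') (le_max_left _ _)
      · exact le_trans (intOneLe h') (le_max_right _ _)
    simp only [Int.cast_zero, abs_zero, mul_zero, zero_sub, abs_neg]
    rw [max_eq_right (abs_nonneg ((n:ℝ)))]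
    nlinarith [min_le_right c 1]
  · have hkey := hP m n p hm
    have hK : |(m:ℝ)| ≤ max (max |(m:ℝ)| |(n:ℝ)|) |(p:ℝ)| := le_max_of_le_left (le_max_left _ _)
    have h2 := mul_le_mul_of_nonneg_right hK (sq_nonneg (max |α * (m:ℝ) - n| |β * (m:ℝ) - p|))
    exact le_trans (min_le_left c 1) (le_trans hkey h2)

lemma easy42 {α β : ℝ}
    (H : ∃ c : ℝ, 0 < c ∧ ∀ m n p : ℤ, ¬(m = 0 ∧ n = 0 ∧ p = 0) →
      c ≤ max (max |(m : ℝ)| |(n : ℝ)|) |(p : ℝ)| * (max |α * m - n| |β * m - p|) ^ 2) :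
    ∃ c : ℝ, 0 < c ∧ ∀ m n p : ℤ, m ≠ 0 →
      c ≤ |(m : ℝ)| * (max |α * m - n| |β * m - p|) ^ 2 := by
  obtain ⟨c, hc, hP⟩ := H
  set C := 1 + max |α| |β| with hC
  have hC1 : (1:ℝ) ≤ C := by
    rw [hC]; have := le_max_left |α| |β|; have := abs_nonneg α; linarith
  have hC0 : (0:ℝ) < C := lt_of_lt_of_le one_pos hC1
  refine ⟨min 1 (c / C), lt_min one_pos (by positivity), ?_⟩
  intro m n p hm
  set E := max |α * (m:ℝ) - n| |β * (m:ℝ) - p| with hE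
  have hE0 : 0 ≤ E := le_trans (abs_nonneg _) (le_max_left _ _)
  have hm1 : (1:ℝ) ≤ |(m:ℝ)| := intOneLe hm
  by_cases hEc : 1 ≤ E
  · have : (1:ℝ) ≤ |(m:ℝ)| * E^2 := by nlinarith
    exact le_trans (min_le_left _ _) this
  · push_neg at hEc
    have hbn : |(n:ℝ)| ≤ C * |(m:ℝ)| := by
      have t1 : |(n:ℝ)| ≤ |α * (m:ℝ)| + |α * (m:ℝ) - n| := by
        calc |(n:ℝ)| = |α * (m:ℝ) + (-(α * (m:ℝ) - n))| := by congr 1; ring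
          _ ≤ |α * (m:ℝ)| + |(-(α * (m:ℝ) - n))| := abs_add_le _ _
          _ = |α * (m:ℝ)| + |α * (m:ℝ) - n| := by rw [abs_neg]
      have t2 : |α * (m:ℝ)| ≤ max |α| |β| * |(m:ℝ)| := by
        rw [abs_mul]
        exact mul_le_mul_of_nonneg_right (le_max_left _ _) (abs_nonneg _)
      have t3 : |α * (m:ℝ) - n| ≤ E := le_max_left _ _
      have : |(n:ℝ)| ≤ max |α| |β| * |(m:ℝ)| + 1 := by linarith
      calc |(n:ℝ)| ≤ max |α| |β| * |(m:ℝ)| + 1 := this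
        _ ≤ max |α| |β| * |(m:ℝ)| + |(m:ℝ)| := by linarith
        _ = C * |(m:ℝ)| := by rw [hC]; ring
    have hbp : |(p:ℝ)| ≤ C * |(m:ℝ)| := by
      have t1 : |(p:ℝ)| ≤ |β * (m:ℝ)| + |β * (m:ℝ) - p| := by
        calc |(p:ℝ)| = |β * (m:ℝ) + (-(β * (m:ℝ) - p))| := by congr 1; ring
          _ ≤ |β * (m:ℝ)| + |(-(β * (m:ℝ) - p))| := abs_add_le _ _
          _ = |β * (m:ℝ)| + |β * (m:ℝ) - p| := by rw [abs_neg]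
      have t2 : |β * (m:ℝ)| ≤ max |α| |β| * |(m:ℝ)| := by
        rw [abs_mul]
        exact mul_le_mul_of_nonneg_right (le_max_right _ _) (abs_nonneg _)
      have t3 : |β * (m:ℝ) - p| ≤ E := le_max_right _ _
      have : |(p:ℝ)| ≤ max |α| |β| * |(m:ℝ)| + 1 := by linarith
      calc |(p:ℝ)| ≤ max |α| |β| * |(m:ℝ)| + 1 := this
        _ ≤ max |α| |β| * |(m:ℝ)| + |(m:ℝ)| := by linarith
        _ = C * |(m:ℝ)| := by rw [hC]; ring
    have hbm : |(m:ℝ)| ≤ C * |(m:ℝ)| := by nlinarith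
    have hK : max (max |(m:ℝ)| |(n:ℝ)|) |(p:ℝ)| ≤ C * |(m:ℝ)| :=
      max_le (max_le hbm hbn) hbp
    have hkey := hP m n p (by rintro ⟨h1, _, _⟩; exact hm h1)
    rw [← hE] at hkey
    have h2 : c ≤ C * |(m:ℝ)| * E^2 :=
      le_trans hkey (mul_le_mul_of_nonneg_right hK (sq_nonneg E))
    have h3 : c / C ≤ |(m:ℝ)| * E^2 := by
      rw [div_le_iff₀ hC0]
      nlinarith
    exact le_trans (min_le_right _ _) h3

lemma easy46 {α β : ℝ}
    (H : ∃ c : ℝ, 0 < c ∧ ∀ m n p : ℤ, ¬(m = 0 ∧ n = 0 ∧ p = 0) →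
      c ≤ max (max |(m : ℝ)| |(n : ℝ)|) |(p : ℝ)| * (max |α * m - n| |β * m - p|) ^ 2) :
    ∃ c : ℝ, 0 < c ∧ ∀ m n p : ℤ, ¬(m = 0 ∧ n = 0 ∧ p = 0) →
      c ≤ ‖toR3 ![m, n, p]‖ * ((α * m - n) ^ 2 + (β * m - p) ^ 2) := by
  obtain ⟨c, hc, hP⟩ := H
  refine ⟨c, hc, fun m n p h => ?_⟩
  set K := max (max |(m:ℝ)| |(n:ℝ)|) |(p:ℝ)| with hK
  have hK0 : 0 ≤ K := le_max_of_le_left (le_max_of_le_left (abs_nonneg _))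
  have hKN : K ≤ ‖toR3 ![m,n,p]‖ :=
    le_of_pow_le_pow_left₀ two_ne_zero (norm_nonneg _) (Ksq_bounds m n p).1
  set E := max |α * (m:ℝ) - n| |β * (m:ℝ) - p| with hE
  have hE0 : 0 ≤ E := le_trans (abs_nonneg _) (le_max_left _ _)
  have hEsum : E^2 ≤ (α * (m:ℝ) - n)^2 + (β * (m:ℝ) - p)^2 := by
    rcases max_choice |α * (m:ℝ) - n| |β * (m:ℝ) - p| with h' | h' <;> rw [hE, h'] <;>
      nlinarith [sq_abs (α * (m:ℝ) - n), sq_abs (β * (m:ℝ) - p),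
        sq_nonneg (α * (m:ℝ) - n), sq_nonneg (β * (m:ℝ) - p)]
  have := mul_le_mul hKN hEsum (sq_nonneg E) (norm_nonneg _)
  exact le_trans (hP m n p h) this

lemma easy64 {α β : ℝ}
    (H : ∃ c : ℝ, 0 < c ∧ ∀ m n p : ℤ, ¬(m = 0 ∧ n = 0 ∧ p = 0) →
      c ≤ ‖toR3 ![m, n, p]‖ * ((α * m - n) ^ 2 + (β * m - p) ^ 2)) :
    ∃ c : ℝ, 0 < c ∧ ∀ m n p : ℤ, ¬(m = 0 ∧ n = 0 ∧ p = 0) →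
      c ≤ max (max |(m : ℝ)| |(n : ℝ)|) |(p : ℝ)| * (max |α * m - n| |β * m - p|) ^ 2 := by
  obtain ⟨c, hc, hP⟩ := H
  refine ⟨c/4, by positivity, fun m n p h => ?_⟩
  set K := max (max |(m:ℝ)| |(n:ℝ)|) |(p:ℝ)| with hK
  have hK0 : 0 ≤ K := le_max_of_le_left (le_max_of_le_left (abs_nonneg _))
  have hN2 : ‖toR3 ![m,n,p]‖ ≤ 2 * K := by
    apply le_of_pow_le_pow_left₀ two_ne_zero (by linarith)
    have := (Ksq_bounds m n p).2
    nlinarith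
  set E := max |α * (m:ℝ) - n| |β * (m:ℝ) - p| with hE
  have hE0 : 0 ≤ E := le_trans (abs_nonneg _) (le_max_left _ _)
  have hsum : (α * (m:ℝ) - n)^2 + (β * (m:ℝ) - p)^2 ≤ 2 * E^2 := by
    have a1 : |α * (m:ℝ) - n| ≤ E := le_max_left _ _
    have a2 : |β * (m:ℝ) - p| ≤ E := le_max_right _ _
    nlinarith [sq_abs (α * (m:ℝ) - n), sq_abs (β * (m:ℝ) - p),
      pow_le_pow_left₀ (abs_nonneg (α * (m:ℝ) - n)) a1 2,
      pow_le_pow_left₀ (abs_nonneg (β * (m:ℝ) - p)) a2 2]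
  have hsum0 : 0 ≤ (α * (m:ℝ) - n)^2 + (β * (m:ℝ) - p)^2 := by positivity
  have hupper : ‖toR3 ![m,n,p]‖ * ((α * (m:ℝ) - n)^2 + (β * (m:ℝ) - p)^2) ≤ 2 * K * (2 * E^2) :=
    mul_le_mul hN2 hsum hsum0 (by linarith)
  have := hP m n p h
  nlinarith

end TransferenceAux

/-- Lemma 7: Transference theorem in dimension 2. -/
theorem transference_dim2 (α β : ℝ)
    (hind : LinearIndependent ℚ ![(1 : ℝ), α, β]) :
    List.TFAE
      [ -- (a)
        (∃ c : ℝ, 0 < c ∧ ∀ m n p : ℤ, ¬(n = 0 ∧ p = 0) →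
          c ≤ |(m : ℝ) + n * α + p * β| * (max |(n : ℝ)| |(p : ℝ)|) ^ 2),
        -- (b)
        (∃ c : ℝ, 0 < c ∧ ∀ m n p : ℤ, m ≠ 0 →
          c ≤ |(m : ℝ)| * (max |α * m - n| |β * m - p|) ^ 2),
        -- (a')
        (∃ c : ℝ, 0 < c ∧ ∀ m n p : ℤ, ¬(m = 0 ∧ n = 0 ∧ p = 0) →
          c ≤ |(m : ℝ) + n * α + p * β| * (max (max |(m : ℝ)| |(n : ℝ)|) |(p : ℝ)|) ^ 2),
        -- (b')
        (∃ c : ℝ, 0 < c ∧ ∀ m n p : ℤ, ¬(m = 0 ∧ n = 0 ∧ p = 0) →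
          c ≤ max (max |(m : ℝ)| |(n : ℝ)|) |(p : ℝ)| * (max |α * m - n| |β * m - p|) ^ 2),
        -- (A)
        (∃ c : ℝ, 0 < c ∧ ∀ m n p : ℤ, ¬(m = 0 ∧ n = 0 ∧ p = 0) →
          c ≤ |(m : ℝ) + n * α + p * β| * ‖toR3 ![m, n, p]‖ ^ 2),
        -- (B)
        (∃ c : ℝ, 0 < c ∧ ∀ m n p : ℤ, ¬(m = 0 ∧ n = 0 ∧ p = 0) →
          c ≤ ‖toR3 ![m, n, p]‖ * ((α * m - n) ^ 2 + (β * m - p) ^ 2)) ] :=  by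
  tfae_have 1 → 2 := hard12 hind
  tfae_have 2 → 1 := hard21 hind
  tfae_have 1 → 3 := easy13
  tfae_have 3 → 1 := easy31
  tfae_have 3 → 5 := easy35
  tfae_have 5 → 3 := easy53
  tfae_have 2 → 4 := easy24
  tfae_have 4 → 2 := easy42
  tfae_have 4 → 6 := easy46
  tfae_have 6 → 4 := easy64
  tfae_finish


end
end

section
/- Let (aₛ) and (bₛ) be sequences of vectors in the Euclidean plane with 0 < ‖bₛ‖ ≤ ‖aₛ‖ for every s, and for each s let ρₛ be the supremum of all r ≥ 0 such that the closed disk of radius r centered at 0 is contained in the convex hull of {aₛ, bₛ, −aₛ, −bₛ}. If lim_{s→∞} ρₛ/‖aₛ‖ = 0, then lim_{s→∞} sin(∠(aₛ, bₛ)) · ‖bₛ‖/‖aₛ‖ = 0, where ∠(aₛ, bₛ) denotes the undirected angle between aₛ and bₛ. -/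
open Filter InnerProductGeometry Polynomial

noncomputable section

abbrev E2 := EuclideanSpace ℝ (Fin 2)

/-- The inner radius at `0` of the symmetric parallelogram with vertices `±a, ±b`. -/
def pgramRadius (a b : E2) : ℝ :=
  sSup {r : ℝ | 0 ≤ r ∧ Metric.closedBall (0 : E2) r ⊆ convexHull ℝ {a, b, -a, -b}}

/-- cross-product bound: |x₀v₁ - x₁v₀| ≤ ‖x‖‖v‖. -/
lemma crossBound (x v : E2) : |x 0 * v 1 - x 1 * v 0| ≤ ‖x‖ * ‖v‖ := by
  set y : E2 := (WithLp.equiv 2 (Fin 2 → ℝ)).symm ![v 1, -v 0] with hy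
  have hyv : ‖y‖ = ‖v‖ := by
    rw [EuclideanSpace.norm_eq, EuclideanSpace.norm_eq]
    congr 1
    simp [hy, Fin.sum_univ_two, Real.norm_eq_abs, sq_abs]
    ring
  have h := abs_real_inner_le_norm x y
  rw [hyv] at h
  have hin : (inner ℝ x y : ℝ) = x 0 * v 1 - x 1 * v 0 := by
    simp [hy, PiLp.inner_apply, Fin.sum_univ_two, RCLike.inner_apply]
    ring
  rwa [hin] at h

/-- Membership in the hull of ±a, ±b via the ℓ¹ criterion. -/
lemma memHull (a b x : E2) (s t : ℝ) (hx : x = s • a + t • b) (hst : |s| + |t| ≤ 1) :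
    x ∈ convexHull ℝ ({a, b, -a, -b} : Set E2) := by
  set S : Set E2 := {a, b, -a, -b} with hS
  have hconv : Convex ℝ (convexHull ℝ S) := convex_convexHull ℝ S
  set w : Fin 4 → ℝ := ![(|s| + s) / 2 + (1 - |s| - |t|) / 2, (|t| + t) / 2,
    (|s| - s) / 2 + (1 - |s| - |t|) / 2, (|t| - t) / 2] with hw
  set z : Fin 4 → E2 := ![a, b, -a, -b] with hz
  have hmem : ∀ i ∈ Finset.univ, z i ∈ convexHull ℝ S := by
    intro i _
    apply subset_convexHull
    fin_cases i <;> simp [hz, hS]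
  have h0 : ∀ i ∈ Finset.univ, 0 ≤ w i := by
    intro i _
    have h1 := abs_nonneg s
    have h2 := abs_nonneg t
    have h3 := neg_abs_le s
    have h4 := neg_abs_le t
    have h5 := le_abs_self s
    have h6 := le_abs_self t
    fin_cases i <;> simp [hw] <;> linarith
  have h1 : ∑ i ∈ Finset.univ, w i = 1 := by
    simp [hw, Fin.sum_univ_four]; ring
  have := hconv.sum_mem h0 h1 hmem
  have heq : ∑ i ∈ Finset.univ, w i • z i = x := by
    rw [hx]
    simp only [hw, hz, Fin.sum_univ_four]
    simp only [Matrix.cons_val_zero, Matrix.cons_val_one, Matrix.head_cons,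
      Matrix.cons_val_two, Matrix.tail_cons, Matrix.cons_val_three]
    module
  rwa [heq] at this

lemma keyIneq (a b : E2) (hb : 0 < ‖b‖) (hba : ‖b‖ ≤ ‖a‖) :
    Real.sin (InnerProductGeometry.angle a b) * ‖b‖ / 2 ≤ pgramRadius a b := by
  have ha : 0 < ‖a‖ := lt_of_lt_of_le hb hba
  set θ := InnerProductGeometry.angle a b with hθ
  have hsin0 : 0 ≤ Real.sin θ := Real.sin_nonneg_of_nonneg_of_le_pi (angle_nonneg a b) (angle_le_pi a b)
  set r₀ : ℝ := Real.sin θ * ‖b‖ / 2 with hr₀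
  have hr₀0 : 0 ≤ r₀ := by positivity
  -- cross identity
  set c : ℝ := a 0 * b 1 - a 1 * b 0 with hc
  have hcross : Real.sin θ * (‖a‖ * ‖b‖) = |c| := by
    rw [hθ, sin_angle_mul_norm_mul_norm]
    have hA : (inner ℝ a a : ℝ) = a 0 * a 0 + a 1 * a 1 := by
      simp only [PiLp.inner_apply, Fin.sum_univ_two, RCLike.inner_apply, conj_trivial]
    have hB : (inner ℝ b b : ℝ) = b 0 * b 0 + b 1 * b 1 := by
      simp only [PiLp.inner_apply, Fin.sum_univ_two, RCLike.inner_apply, conj_trivial]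
    have hAB : (inner ℝ a b : ℝ) = a 0 * b 0 + a 1 * b 1 := by
      simp [PiLp.inner_apply, Fin.sum_univ_two, RCLike.inner_apply]
      ring
    rw [hA, hB, hAB]
    rw [show (a 0 * a 0 + a 1 * a 1) * (b 0 * b 0 + b 1 * b 1) -
        (a 0 * b 0 + a 1 * b 1) * (a 0 * b 0 + a 1 * b 1) = c ^ 2 by rw [hc]; ring]
    exact Real.sqrt_sq_eq_abs c
  -- boundedness of the set
  have hbdd : BddAbove {r : ℝ | 0 ≤ r ∧ Metric.closedBall (0 : E2) r ⊆
      convexHull ℝ ({a, b, -a, -b} : Set E2)} := by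
    refine ⟨‖a‖, fun r hr => ?_⟩
    obtain ⟨hr0, hrsub⟩ := hr
    have hhull : convexHull ℝ ({a, b, -a, -b} : Set E2) ⊆ Metric.closedBall 0 ‖a‖ := by
      apply convexHull_min _ (convex_closedBall _ _)
      intro p hp
      rcases hp with h | h | h | h <;> subst h <;>
        simp [mem_closedBall_zero_iff] <;> linarith
    have hpt : ((r / ‖a‖) • a : E2) ∈ Metric.closedBall (0 : E2) r := by
      rw [mem_closedBall_zero_iff, norm_smul, Real.norm_eq_abs,
        abs_of_nonneg (by positivity), div_mul_cancel₀ _ (ne_of_gt ha)]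
    have := hhull (hrsub hpt)
    rw [mem_closedBall_zero_iff, norm_smul, Real.norm_eq_abs,
      abs_of_nonneg (by positivity), div_mul_cancel₀ _ (ne_of_gt ha)] at this
    exact this
  -- r₀ belongs to the set
  apply le_csSup hbdd
  refine ⟨hr₀0, fun x hx => ?_⟩
  rw [mem_closedBall_zero_iff] at hx
  by_cases hc0 : c = 0
  · have : Real.sin θ = 0 := by
      have := hcross
      rw [hc0, abs_zero] at this
      have hab : 0 < ‖a‖ * ‖b‖ := by positivity
      exact (mul_eq_zero.1 this).resolve_right (ne_of_gt hab)
    have hx0 : x = 0 := by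
      have : ‖x‖ ≤ 0 := by rw [hr₀] at hx; rw [this] at hx; linarith
      exact norm_le_zero_iff.1 this
    subst hx0
    exact memHull a b 0 0 0 (by simp) (by simp)
  · have hcabs : 0 < |c| := abs_pos.2 hc0
    have hsinpos : 0 < Real.sin θ := by
      by_contra h
      have : Real.sin θ = 0 := le_antisymm (not_lt.1 h) hsin0
      rw [this, zero_mul] at hcross
      exact hcabs.ne hcross
    set s : ℝ := (x 0 * b 1 - x 1 * b 0) / c with hs
    set t : ℝ := (a 0 * x 1 - a 1 * x 0) / c with ht
    have hdecomp : x = s • a + t • b := by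
      ext i
      fin_cases i <;>
        simp [hs, ht, PiLp.smul_apply, smul_eq_mul] <;>
        field_simp <;> ring
    have hsb : |s| ≤ ‖x‖ * ‖b‖ / |c| := by
      rw [hs, abs_div]
      exact div_le_div_of_nonneg_right (crossBound x b) hcabs.le |>.trans_eq rfl
    have hta : |t| ≤ ‖x‖ * ‖a‖ / |c| := by
      rw [ht, abs_div]
      apply div_le_div_of_nonneg_right _ hcabs.le
      have := crossBound x a
      rw [show |a 0 * x 1 - a 1 * x 0| = |x 0 * a 1 - x 1 * a 0| by rw [abs_sub_comm]; ring_nf]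
      exact this
    apply memHull a b x s t hdecomp
    have hxr : ‖x‖ ≤ Real.sin θ * ‖b‖ / 2 := hx
    have key : ‖x‖ * ‖b‖ / |c| + ‖x‖ * ‖a‖ / |c| ≤ 1 := by
      rw [← add_div, div_le_one hcabs, ← hcross]
      calc ‖x‖ * ‖b‖ + ‖x‖ * ‖a‖ = ‖x‖ * (‖b‖ + ‖a‖) := by ring
        _ ≤ (Real.sin θ * ‖b‖ / 2) * (2 * ‖a‖) := by
            apply mul_le_mul hxr (by linarith) (by positivity) (by positivity)
        _ = Real.sin θ * (‖a‖ * ‖b‖) := by ring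
    linarith [hsb, hta]

/-- Lemma: needling sequence of parallelograms. -/
theorem needling_parallelograms (a b : ℕ → E2)
    (hab : ∀ s, 0 < ‖b s‖ ∧ ‖b s‖ ≤ ‖a s‖)
    (hρ : Filter.Tendsto (fun s => pgramRadius (a s) (b s) / ‖a s‖) Filter.atTop (nhds 0)) :
    Filter.Tendsto
      (fun s => Real.sin (InnerProductGeometry.angle (a s) (b s)) * (‖b s‖ / ‖a s‖))
      Filter.atTop (nhds 0) := by
  refine squeeze_zero (fun s => ?_) (fun s => ?_) ?_ (g := fun s => 2 * (pgramRadius (a s) (b s) / ‖a s‖))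
  · have h0 := Real.sin_nonneg_of_nonneg_of_le_pi (angle_nonneg (a s) (b s)) (angle_le_pi (a s) (b s))
    have := (hab s).1
    positivity
  · obtain ⟨hb, hba⟩ := hab s
    have ha : 0 < ‖a s‖ := lt_of_lt_of_le hb hba
    have h := keyIneq (a s) (b s) hb hba
    rw [div_le_iff₀ (by norm_num : (0:ℝ) < 2)] at h
    show Real.sin (InnerProductGeometry.angle (a s) (b s)) * (‖b s‖ / ‖a s‖)
        ≤ 2 * (pgramRadius (a s) (b s) / ‖a s‖)
    rw [show Real.sin (InnerProductGeometry.angle (a s) (b s)) * (‖b s‖ / ‖a s‖)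
        = (Real.sin (InnerProductGeometry.angle (a s) (b s)) * ‖b s‖) / ‖a s‖ by ring,
      show (2:ℝ) * (pgramRadius (a s) (b s) / ‖a s‖) = pgramRadius (a s) (b s) * 2 / ‖a s‖ by ring]
    exact div_le_div_of_nonneg_right h ha.le
  · have := hρ.const_mul (2:ℝ)
    simpa using this


end
end
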